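/- arXiv:2201.04901 — 8 statements merged into one kernel-verified Lean document; each statement's English description precedes it below -/
import Mathlib

section
/- Let G be a graph with n vertices and adjacency eigenvalues λ_1 ≥ ... ≥ λ_n. Then the independence number α(G) satisfies α(G) ≤ min{ |{i : λ_i ≥ 0}|, |{i : λ_i ≤ 0}| }. -/
open Matrix Polynomial

/-- The independence number of a graph: the maximum cardinality of a set of
pairwise non-adjacent vertices. -/
noncomputable def indepNum {V : Type*} [Fintype V] (G : SimpleGraph V) : ℕ :=
  sSup {r | ∃ s : Finset V, s.card = r ∧ ∀ u ∈ s, ∀ v ∈ s, u ≠ v → ¬ G.Adj u v}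

section Aux

lemma cvet_dp_sum_left {V ι : Type*} [Fintype V] (t : Finset ι) (f : ι → V → ℝ) (y : V → ℝ) :
    (∑ i ∈ t, f i) ⬝ᵥ y = ∑ i ∈ t, (f i) ⬝ᵥ y := by
  simp only [dotProduct, Finset.sum_apply, Finset.sum_mul]
  exact Finset.sum_comm

lemma cvet_dp_sum_right {V ι : Type*} [Fintype V] (t : Finset ι) (y : V → ℝ) (f : ι → V → ℝ) :
    y ⬝ᵥ (∑ i ∈ t, f i) = ∑ i ∈ t, y ⬝ᵥ (f i) := by
  simp only [dotProduct, Finset.sum_apply, Finset.mul_sum]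
  exact Finset.sum_comm

lemma cvet_mv_sum {V ι : Type*} [Fintype V] (B : Matrix V V ℝ) (t : Finset ι) (f : ι → V → ℝ) :
    B *ᵥ (∑ i ∈ t, f i) = ∑ i ∈ t, B *ᵥ (f i) := by
  simpa only [Matrix.mulVecLin_apply] using map_sum (Matrix.mulVecLin B) f t

/-- Core linear-algebraic fact: if the quadratic form of `B` vanishes on all vectors
supported on `s`, and `B` has an orthonormal eigenbasis with eigenvalues `μ`, then
`s.card` is at most the number of nonnegative eigenvalues. -/
lemma cvet_core {V : Type*} [Fintype V] [DecidableEq V]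
    (B : Matrix V V ℝ) (b : OrthonormalBasis V ℝ (EuclideanSpace ℝ V)) (μ : V → ℝ)
    (hb : ∀ j, B *ᵥ ⇑(b j) = μ j • ⇑(b j))
    (s : Finset V)
    (hq : ∀ x : V → ℝ, (∀ v, v ∉ s → x v = 0) → x ⬝ᵥ (B *ᵥ x) = 0) :
    s.card ≤ (Finset.univ.filter (fun i => 0 ≤ μ i)).card := by
  by_contra hlt
  push_neg at hlt
  set P : Finset V := Finset.univ.filter (fun i => 0 ≤ μ i) with hP
  set N : Finset V := Finset.univ.filter (fun i => ¬ 0 ≤ μ i) with hN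
  have hPN : P.card + N.card = Fintype.card V := by
    rw [hP, hN, Finset.card_filter_add_card_filter_not, Finset.card_univ]
  set u : s → (V → ℝ) := fun v => Pi.single (v : V) (1 : ℝ) with hu
  set w : N → (V → ℝ) := fun j => ⇑(b (j : V)) with hw
  set U : Submodule ℝ (V → ℝ) := Submodule.span ℝ (Set.range u) with hU
  set W : Submodule ℝ (V → ℝ) := Submodule.span ℝ (Set.range w) with hWdef
  have hfinU : Module.finrank ℝ U = s.card := by
    rw [hU, finrank_span_eq_card ?_]
    · exact Fintype.card_coe s
    · have h := (Pi.basisFun ℝ V).linearIndependent.comp (Subtype.val : {x // x ∈ s} → V)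
        Subtype.val_injective
      have heq : u = (⇑(Pi.basisFun ℝ V) ∘ Subtype.val) := by
        funext v; simp [hu]
      rw [heq]; exact h
  have hwli : LinearIndependent ℝ w := by
    have hli : LinearIndependent ℝ (fun j : V => (⇑(b j) : V → ℝ)) := by
      have h2 := b.toBasis.linearIndependent.map' (WithLp.linearEquiv 2 ℝ (V → ℝ)).toLinearMap
        (WithLp.linearEquiv 2 ℝ (V → ℝ)).ker
      exact h2
    exact hli.comp _ Subtype.val_injective
  have hfinW : Module.finrank ℝ W = N.card := by
    rw [hWdef, finrank_span_eq_card hwli, Fintype.card_coe]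
  have hinf : U ⊓ W ≠ ⊥ := by
    intro hbot
    have h1 := Submodule.finrank_sup_add_finrank_inf_eq U W
    rw [hbot] at h1
    have h2 : Module.finrank ℝ ↥(U ⊔ W) ≤ Fintype.card V := by
      have h3 := Submodule.finrank_le (U ⊔ W)
      simpa [Module.finrank_fintype_fun_eq_card] using h3
    simp only [hfinU, hfinW, finrank_bot, add_zero] at h1
    omega
  obtain ⟨x, hxmem, hxne⟩ := Submodule.exists_mem_ne_zero_of_ne_bot hinf
  obtain ⟨hxU, hxW⟩ := hxmem
  have hsupp : ∀ v, v ∉ s → x v = 0 := by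
    have hle : U ≤ Submodule.pi (Set.compl ↑s) (fun _ => ⊥ : V → Submodule ℝ ℝ) := by
      rw [hU, Submodule.span_le]
      rintro _ ⟨v, rfl⟩
      intro t ht
      simp only [Submodule.mem_bot]
      exact Pi.single_eq_of_ne (fun h : t = ↑v => ht (by rw [h]; exact v.2)) 1
    intro v hv
    simpa using hle hxU v hv
  obtain ⟨d, hd⟩ := (Submodule.mem_span_range_iff_exists_fun ℝ).mp hxW
  have hortho : ∀ j k : V, ⇑(b j) ⬝ᵥ ⇑(b k) = if j = k then 1 else 0 := by
    intro j k
    have h := orthonormal_iff_ite.mp b.orthonormal j k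
    simpa [PiLp.inner_apply, dotProduct, RCLike.inner_apply, conj_trivial, mul_comm] using h
  have hqx : x ⬝ᵥ (B *ᵥ x) = ∑ j : N, μ (j : V) * d j ^ 2 := by
    rw [← hd, cvet_mv_sum, cvet_dp_sum_right]
    have h1 : ∀ j : N, (∑ k : N, d k • w k) ⬝ᵥ (B *ᵥ (d j • w j)) = μ (j : V) * d j ^ 2 := by
      intro j
      rw [Matrix.mulVec_smul, hw, hb, cvet_dp_sum_left]
      have h2 : ∀ k : N, (d k • w k) ⬝ᵥ (d j • μ (j : V) • ⇑(b (j : V)))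
          = if k = j then μ (j : V) * d j ^ 2 else 0 := by
        intro k
        rw [smul_dotProduct, dotProduct_smul, dotProduct_smul, hw, hortho]
        by_cases hkj : k = j
        · subst hkj; simp; ring
        · have : ((k : V)) ≠ (j : V) := fun h => hkj (Subtype.ext h)
          simp [this, hkj]
      rw [Finset.sum_congr rfl (fun k _ => h2 k), Finset.sum_ite_eq' Finset.univ j _]
      simp
    exact Finset.sum_congr rfl (fun j _ => h1 j)
  have hzero := hq x hsupp
  rw [hqx] at hzero
  have hneg : ∀ j : N, μ (j : V) * d j ^ 2 ≤ 0 := by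
    intro j
    have hj : ¬ 0 ≤ μ (j : V) := (Finset.mem_filter.mp j.2).2
    nlinarith [sq_nonneg (d j)]
  have hall := (Finset.sum_eq_zero_iff_of_nonpos (fun j _ => hneg j)).mp hzero
  have hd0 : ∀ j : N, d j = 0 := by
    intro j
    have h1 := hall j (Finset.mem_univ j)
    have hj : ¬ 0 ≤ μ (j : V) := (Finset.mem_filter.mp j.2).2
    rcases mul_eq_zero.mp h1 with h | h
    · exact absurd (le_of_eq h.symm) hj
    · exact pow_eq_zero_iff two_ne_zero |>.mp h
  apply hxne
  rw [← hd]
  exact Finset.sum_eq_zero (fun j _ => by rw [hd0 j, zero_smul])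

lemma cvet_charpoly_conj_unitary {V : Type*} [Fintype V] [DecidableEq V]
    (U : Matrix.unitaryGroup V ℝ) (D : Matrix V V ℝ) :
    ((U : Matrix V V ℝ) * D * (star U : Matrix V V ℝ)).charpoly = D.charpoly := by
  have hUU : (U : Matrix V V ℝ) * (star U : Matrix V V ℝ) = 1 :=
    Matrix.mem_unitaryGroup_iff.mp U.2
  have hUU' : (star U : Matrix V V ℝ) * (U : Matrix V V ℝ) = 1 :=
    Matrix.mem_unitaryGroup_iff'.mp U.2
  set f := (Polynomial.C : ℝ →+* ℝ[X])
  have key : charmatrix ((U : Matrix V V ℝ) * D * (star U : Matrix V V ℝ)) =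
      ((U : Matrix V V ℝ).map f) * charmatrix D * ((star U : Matrix V V ℝ).map f) := by
    unfold charmatrix
    rw [Matrix.mul_sub, Matrix.sub_mul]
    congr 1
    · rw [← Matrix.scalar_commute (X : ℝ[X]) (Commute.all _) _]
      rw [Matrix.mul_assoc, ← Matrix.map_mul, hUU, Matrix.map_one f (map_zero f) (map_one f),
        Matrix.mul_one]
    · simp [Matrix.map_mul, Matrix.mul_assoc, f]
  rw [Matrix.charpoly, Matrix.charpoly, key, Matrix.det_mul, Matrix.det_mul, mul_comm,
    ← mul_assoc, ← Matrix.det_mul, ← Matrix.map_mul, hUU',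
    Matrix.map_one f (map_zero f) (map_one f), Matrix.det_one, one_mul]

lemma cvet_charpoly_diagonal {V : Type*} [Fintype V] [DecidableEq V] (d : V → ℝ) :
    (Matrix.diagonal d).charpoly = ∏ i, (X - C (d i)) := by
  rw [Matrix.charpoly]
  have h : charmatrix (Matrix.diagonal d) = Matrix.diagonal (fun i => (X : ℝ[X]) - C (d i)) := by
    ext i j
    by_cases h : i = j
    · subst h; simp [charmatrix_apply_eq]
    · simp [charmatrix_apply_ne _ _ _ h, Matrix.diagonal_apply_ne _ h]
  rw [h, Matrix.det_diagonal]

lemma cvet_ncard_countP (n : ℕ) (lam : Fin n → ℝ) (p : ℝ → Prop) [DecidablePred p] :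
    {i : Fin n | p (lam i)}.ncard = Multiset.countP p (Multiset.map lam Finset.univ.val) := by
  rw [Set.ncard_eq_toFinset_card', Set.toFinset_setOf, Multiset.countP_map]
  rw [Finset.card_filter]
  simp [Multiset.countP_eq_card_filter, Finset.filter]

lemma cvet_filter_countP {V : Type*} [Fintype V] (μ : V → ℝ) (p : ℝ → Prop) [DecidablePred p] :
    (Finset.univ.filter (fun i => p (μ i))).card
      = Multiset.countP p (Multiset.map μ Finset.univ.val) := by
  rw [Multiset.countP_map, Finset.card_filter]
  simp [Multiset.countP_eq_card_filter, Finset.filter]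

end Aux

/-- **Cvetković's inertia bound.** If `lam : Fin n → ℝ` enumerates the adjacency
eigenvalues of `G` in decreasing order (with multiplicity), then
`α(G) ≤ min{ #{i : λ_i ≥ 0}, #{i : λ_i ≤ 0} }`. -/
theorem stmt0 {V : Type*} [Fintype V] [DecidableEq V] (G : SimpleGraph V)
    [DecidableRel G.Adj] (n : ℕ) (hn : n = Fintype.card V)
    (lam : Fin n → ℝ) (hsort : Antitone lam)
    (hroots : (G.adjMatrix ℝ).charpoly.roots = Multiset.map lam Finset.univ.val) :
    indepNum G ≤ min {i : Fin n | 0 ≤ lam i}.ncard {i : Fin n | lam i ≤ 0}.ncard := by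
  set A := G.adjMatrix ℝ with hAdef
  have hA : A.IsHermitian := by
    show Aᴴ = A
    ext i j
    simp [hAdef, Matrix.conjTranspose_apply, SimpleGraph.adjMatrix_apply, G.adj_comm]
  set μ := hA.eigenvalues with hμ
  -- charpoly of A
  have hcp : A.charpoly = ∏ i, (X - C (μ i)) := by
    have hsp := hA.spectral_theorem
    have hdiag : Matrix.diagonal ((RCLike.ofReal : ℝ → ℝ) ∘ μ) = Matrix.diagonal μ := by
      simp [RCLike.ofReal_real_eq_id]
    calc A.charpoly
        = ((hA.eigenvectorUnitary : Matrix V V ℝ) * Matrix.diagonal ((RCLike.ofReal : ℝ → ℝ) ∘ μ)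
            * (star hA.eigenvectorUnitary : Matrix V V ℝ)).charpoly := by exact congrArg Matrix.charpoly hsp
      _ = (Matrix.diagonal ((RCLike.ofReal : ℝ → ℝ) ∘ μ)).charpoly :=
            cvet_charpoly_conj_unitary _ _
      _ = ∏ i, (X - C (μ i)) := by rw [hdiag, cvet_charpoly_diagonal]
  -- multiset of roots
  have hmult : Multiset.map lam Finset.univ.val = Multiset.map μ Finset.univ.val := by
    have h1 : (∏ i, (X - C (μ i)))
        = (Multiset.map (fun a => X - C a) (Multiset.map μ Finset.univ.val)).prod := by
      rw [Multiset.map_map]; rfl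
    rw [← hroots, hcp, h1, Polynomial.roots_multiset_prod_X_sub_C]
  -- count translation
  have hcount : ∀ (p : ℝ → Prop) (_ : DecidablePred p),
      {i : Fin n | p (lam i)}.ncard = (Finset.univ.filter (fun i => p (μ i))).card := by
    intro p hp
    rw [cvet_ncard_countP, cvet_filter_countP, hmult]
  -- the bound for an independent set
  have hbound : ∀ s : Finset V, (∀ u ∈ s, ∀ v ∈ s, u ≠ v → ¬ G.Adj u v) →
      s.card ≤ min {i : Fin n | 0 ≤ lam i}.ncard {i : Fin n | lam i ≤ 0}.ncard := by
    intro s hs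
    have hq : ∀ x : V → ℝ, (∀ v, v ∉ s → x v = 0) → x ⬝ᵥ (A *ᵥ x) = 0 := by
      intro x hx
      simp only [dotProduct, Matrix.mulVec]
      apply Finset.sum_eq_zero
      intro u _
      by_cases hu : u ∈ s
      · rw [Finset.mul_sum]
        apply Finset.sum_eq_zero
        intro v _
        by_cases hv : v ∈ s
        · have hadj : ¬ G.Adj u v := by
            by_cases huv : u = v
            · subst huv; exact G.loopless.irrefl u
            · exact hs u hu v hv huv
          simp [hAdef, SimpleGraph.adjMatrix_apply, hadj, dotProduct]
        · rw [hx v hv, mul_zero, mul_zero]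
      · rw [hx u hu, zero_mul]
    have h1 : s.card ≤ (Finset.univ.filter (fun i => 0 ≤ μ i)).card :=
      cvet_core A hA.eigenvectorBasis μ (fun j => hA.mulVec_eigenvectorBasis j) s hq
    have h2 : s.card ≤ (Finset.univ.filter (fun i => 0 ≤ -μ i)).card := by
      apply cvet_core (-A) hA.eigenvectorBasis (fun i => -μ i) ?_ s ?_
      · intro j
        rw [Matrix.neg_mulVec, hA.mulVec_eigenvectorBasis j, neg_smul]
      · intro x hx
        rw [Matrix.neg_mulVec, dotProduct_neg, hq x hx, neg_zero]
    refine le_min ?_ ?_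
    · rw [hcount (fun t => 0 ≤ t) inferInstance]; exact h1
    · rw [hcount (fun t => t ≤ 0) inferInstance]
      calc s.card ≤ (Finset.univ.filter (fun i => 0 ≤ -μ i)).card := h2
        _ = (Finset.univ.filter (fun i => μ i ≤ 0)).card := by
            apply Finset.card_bij (fun a _ => a) <;> simp [neg_nonneg]
  -- conclude via sSup
  unfold indepNum
  have hne : {r | ∃ s : Finset V, s.card = r ∧ ∀ u ∈ s, ∀ v ∈ s, u ≠ v → ¬ G.Adj u v}.Nonempty :=
    ⟨0, ∅, by simp, by simp⟩
  apply csSup_le hne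
  rintro r ⟨s, rfl, hs⟩
  exact hbound s hs
end

section
/- Let G be a connected d-regular graph on n vertices with adjacency eigenvalues λ_1 = d ≥ λ_2 ≥ ... ≥ λ_n, with λ_n < 0. Then the independence number satisfies α(G) ≤ n / (1 - λ_1/λ_n). -/
open Matrix Polynomial
open scoped Pointwise

lemma isRoot_charpoly_of_mem_spectrum {m : Type*} [Fintype m] [DecidableEq m]
    {A : Matrix m m ℝ} {μ : ℝ} (h : μ ∈ spectrum ℝ A) : A.charpoly.IsRoot μ := by
  rw [spectrum.mem_iff] at h
  have hdet : (algebraMap ℝ (Matrix m m ℝ) μ - A).det = 0 := by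
    by_contra hd
    exact h ((Matrix.isUnit_iff_isUnit_det _).2 (isUnit_iff_ne_zero.2 hd))
  have heval : A.charpoly.eval μ = (algebraMap ℝ (Matrix m m ℝ) μ - A).det := by
    rw [Matrix.charpoly, ← Polynomial.coe_evalRingHom, RingHom.map_det]
    congr 1
    ext i j
    by_cases hij : i = j
    · subst hij
      simp [Matrix.charmatrix_apply_eq, Matrix.algebraMap_matrix_apply]
    · simp [Matrix.charmatrix_apply_ne _ _ _ hij, Matrix.algebraMap_matrix_apply, hij]
  rw [Polynomial.IsRoot, heval, hdet]

lemma quad_form_lower {m : Type*} [Fintype m] [DecidableEq m]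
    {A : Matrix m m ℝ} (hA : A.IsHermitian) {c : ℝ}
    (h : ∀ μ ∈ spectrum ℝ A, c ≤ μ) (x : m → ℝ) :
    c * (x ⬝ᵥ x) ≤ x ⬝ᵥ (A *ᵥ x) := by
  have hB : (A - c • 1).IsHermitian := by
    apply hA.sub
    simp [Matrix.IsHermitian, Matrix.conjTranspose_smul]
  have hev : ∀ i, 0 ≤ hB.eigenvalues i := by
    intro i
    have hmem : hB.eigenvalues i ∈ spectrum ℝ (A - c • 1) := hB.eigenvalues_mem_spectrum_real i
    have hspec : spectrum ℝ (A - c • 1) = spectrum ℝ A - ({c} : Set ℝ) := by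
      rw [show A - c • 1 = A - algebraMap ℝ (Matrix m m ℝ) c from by
        rw [Algebra.algebraMap_eq_smul_one], ← spectrum.sub_singleton_eq]
    rw [hspec] at hmem
    rw [Set.mem_sub] at hmem
    obtain ⟨a, ha, b, hb, hab⟩ := hmem
    rw [Set.mem_singleton_iff] at hb
    subst hb
    rw [← hab]
    linarith [h a ha]
  have hpsd := hB.posSemidef_iff_eigenvalues_nonneg.mpr (fun i => hev i)
  have := hpsd.dotProduct_mulVec_nonneg x
  simp only [star_trivial, Matrix.sub_mulVec, Matrix.smul_mulVec, Matrix.one_mulVec,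
    dotProduct_sub, dotProduct_smul, smul_eq_mul] at this
  linarith


/-- **Hoffman's ratio bound.** For a connected `d`-regular graph on `n` vertices with
adjacency eigenvalues `λ_1 = d ≥ ⋯ ≥ λ_n`, `λ_n < 0`, one has
`α(G) ≤ n / (1 − λ_1/λ_n)`. -/
theorem stmt1 {V : Type*} [Fintype V] [DecidableEq V] (G : SimpleGraph V)
    [DecidableRel G.Adj] (d n : ℕ) (hn : n = Fintype.card V)
    (hconn : G.Connected) (hreg : G.IsRegularOfDegree d)
    (lam : Fin n → ℝ) (hsort : Antitone lam)
    (hroots : (G.adjMatrix ℝ).charpoly.roots = Multiset.map lam Finset.univ.val)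
    (hpos : 0 < n)
    (h1 : lam ⟨0, hpos⟩ = (d : ℝ))
    (hneg : lam ⟨n - 1, Nat.sub_lt hpos Nat.one_pos⟩ < 0) :
    (indepNum G : ℝ) ≤ (n : ℝ) /
      (1 - (d : ℝ) / lam ⟨n - 1, Nat.sub_lt hpos Nat.one_pos⟩) := by
  classical
  set c : ℝ := lam ⟨n - 1, Nat.sub_lt hpos Nat.one_pos⟩ with hc
  set A : Matrix V V ℝ := G.adjMatrix ℝ with hAdef
  -- extract a maximum independent set
  have hmem : indepNum G ∈
      {r | ∃ s : Finset V, s.card = r ∧ ∀ u ∈ s, ∀ v ∈ s, u ≠ v → ¬ G.Adj u v} := by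
    rw [indepNum]
    apply Nat.sSup_mem
    · exact ⟨0, ⟨∅, by simp⟩⟩
    · exact ⟨Fintype.card V, fun r ⟨s, hs, _⟩ => hs ▸ s.card_le_univ⟩
  obtain ⟨s, hcard, hind⟩ := hmem
  -- hermitian
  have hA : A.IsHermitian := by
    rw [Matrix.IsHermitian, conjTranspose_eq_transpose_of_trivial,
      SimpleGraph.transpose_adjMatrix]
  -- spectrum lower bound
  have hspec : ∀ μ ∈ spectrum ℝ A, c ≤ μ := by
    intro μ hμ
    have hr := isRoot_charpoly_of_mem_spectrum hμ
    have hμr : μ ∈ A.charpoly.roots :=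
      (Polynomial.mem_roots').2 ⟨(Matrix.charpoly_monic A).ne_zero, hr⟩
    rw [hroots] at hμr
    obtain ⟨j, _, hj⟩ := Multiset.mem_map.mp hμr
    rw [← hj]
    exact hsort (by exact Fin.mk_le_mk.mpr (Nat.le_sub_one_of_lt j.isLt))
  -- vectors
  set N : ℝ := (n : ℝ) with hNdef
  have hN : 0 < N := by rw [hNdef]; exact_mod_cast hpos
  set α : ℝ := (s.card : ℝ) with hα
  set f : V → ℝ := fun v => if v ∈ s then 1 else 0 with hf
  set o : V → ℝ := Function.const V 1 with ho
  have hsumf : ∑ v, f v = α := by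
    simp [hf, Finset.sum_ite_mem, Finset.univ_inter, hα]
  have b1 : f ⬝ᵥ f = α := by
    have : ∀ v, f v * f v = f v := by
      intro v; by_cases h : v ∈ s <;> simp [hf, h]
    simp only [dotProduct, this, hsumf]
  have b2a : f ⬝ᵥ o = α := by
    simp only [dotProduct, ho, Function.const_apply, mul_one, hsumf]
  have b2b : o ⬝ᵥ f = α := by
    simp only [dotProduct, ho, Function.const_apply, one_mul, hsumf]
  have b3 : o ⬝ᵥ o = N := by
    simp only [dotProduct, ho, Function.const_apply, mul_one, Finset.sum_const,
      Finset.card_univ, nsmul_eq_mul, mul_one, hNdef, hn]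
  have bfc : ∀ a : ℝ, f ⬝ᵥ Function.const V a = α * a := by
    intro a
    simp only [dotProduct, Function.const_apply, ← Finset.sum_mul, hsumf]
  have bcf : ∀ a : ℝ, Function.const V a ⬝ᵥ f = a * α := by
    intro a
    simp only [dotProduct, Function.const_apply, ← Finset.mul_sum, hsumf]
  have boc : ∀ a : ℝ, o ⬝ᵥ Function.const V a = N * a := by
    intro a
    simp only [dotProduct, ho, Function.const_apply, one_mul, Finset.sum_const,
      Finset.card_univ, nsmul_eq_mul, hNdef, hn]
  have b5 : A *ᵥ o = Function.const V (d : ℝ) := by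
    funext v
    rw [hAdef, ho, SimpleGraph.adjMatrix_mulVec_const_apply_of_regular hreg]
    simp
  have b4 : f ⬝ᵥ (A *ᵥ f) = 0 := by
    rw [hAdef, SimpleGraph.dotProduct_mulVec_adjMatrix]
    apply Finset.sum_eq_zero; intro i _
    apply Finset.sum_eq_zero; intro j _
    by_cases hadj : G.Adj i j
    · rw [if_pos hadj]
      by_cases hi : i ∈ s
      · by_cases hj : j ∈ s
        · exact absurd hadj (hind i hi j hj (G.ne_of_adj hadj))
        · simp [hf, hj]
      · simp [hf, hi]
    · rw [if_neg hadj]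
  have hsym : ∀ y z : V → ℝ, y ⬝ᵥ (A *ᵥ z) = (A *ᵥ y) ⬝ᵥ z := by
    intro y z
    rw [Matrix.dotProduct_mulVec]
    congr 1
    funext v
    rw [hAdef, SimpleGraph.adjMatrix_vecMul_apply, SimpleGraph.adjMatrix_mulVec_apply]
  have b6 : o ⬝ᵥ (A *ᵥ f) = (d : ℝ) * α := by
    rw [hsym, b5, bcf]
  have b7 : f ⬝ᵥ (A *ᵥ o) = α * (d : ℝ) := by rw [b5, bfc]
  have b8 : o ⬝ᵥ (A *ᵥ o) = N * (d : ℝ) := by rw [b5, boc]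
  -- the quadratic form inequality
  have key := quad_form_lower hA hspec (N • f - α • o)
  simp only [Matrix.mulVec_sub, Matrix.mulVec_smul, sub_dotProduct,
    smul_dotProduct, dotProduct_sub, dotProduct_smul,
    smul_eq_mul, b1, b2a, b2b, b3, b4, b6, b7, b8, mul_zero] at key
  have hc0 : c < 0 := hneg
  have hd0 : (0 : ℝ) ≤ (d : ℝ) := Nat.cast_nonneg d
  have hα0 : (0 : ℝ) ≤ α := Nat.cast_nonneg _
  -- main algebraic consequence
  have hkey2 : α * ((d : ℝ) - c) ≤ -c * N := by
    rcases eq_or_lt_of_le hα0 with h0 | h0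
    · rw [← h0]; nlinarith
    · nlinarith [mul_pos hN h0, key]
  -- conclude
  rw [← hcard]
  have hden : 0 < 1 - (d : ℝ) / c := by
    have : (d : ℝ) / c ≤ 0 := div_nonpos_of_nonneg_of_nonpos hd0 hc0.le
    linarith
  rw [le_div_iff₀ hden]
  have hcne : c ≠ 0 := hc0.ne
  have hrw : (s.card : ℝ) * (1 - (d : ℝ) / c) = ((s.card : ℝ) * ((d : ℝ) - c)) / (-c) := by
    rw [eq_div_iff (neg_ne_zero.mpr hcne)]
    field_simp
    ring
  rw [hrw, div_le_iff₀ (by linarith : (0 : ℝ) < -c)]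
  calc (s.card : ℝ) * ((d : ℝ) - c) = α * ((d : ℝ) - c) := by rw [hα]
    _ ≤ -c * N := hkey2
    _ = (n : ℝ) * -c := by rw [hNdef]; ring
end

section
/- Let G be a graph with n vertices, adjacency matrix A and eigenvalues λ_1 ≥ ... ≥ λ_n. Let k ≥ 1 and let p be a real polynomial of degree at most k. Set W(p) = max_{u∈V} (p(A))_{uu} and w(p) = min_{u∈V} (p(A))_{uu}. Then the k-independence number satisfies α_k(G) ≤ min{ |{i : p(λ_i) ≥ w(p)}|, |{i : p(λ_i) ≤ W(p)}| }. -/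
open Matrix Polynomial

section Aux

variable {m : Type*} [Fintype m] [DecidableEq m]

/-- If `x` is an eigenvector of `A` with eigenvalue `μ`, then `A ^ j` has eigenvalue `μ ^ j`. -/
lemma sum_mulVec' {ι : Type*} (s : Finset ι) (B : ι → Matrix m m ℝ) (x : m → ℝ) :
    (∑ i ∈ s, B i) *ᵥ x = ∑ i ∈ s, B i *ᵥ x := by
  funext u
  simp only [Matrix.mulVec, dotProduct, Matrix.sum_apply, Finset.sum_mul,
    Finset.sum_apply]
  rw [Finset.sum_comm]

lemma pow_mulVec_eig (A : Matrix m m ℝ) (x : m → ℝ) (μ : ℝ) (hx : A *ᵥ x = μ • x) (j : ℕ) :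
    (A ^ j) *ᵥ x = (μ ^ j) • x := by
  induction j with
  | zero => simp
  | succ j ih =>
    rw [pow_succ, ← Matrix.mulVec_mulVec, hx, Matrix.mulVec_smul, ih, smul_smul, pow_succ]
    ring_nf

/-- Eigenvectors of `A` are eigenvectors of `p(A)` with eigenvalue `p(μ)`. -/
lemma aeval_mulVec_eig (A : Matrix m m ℝ) (x : m → ℝ) (μ : ℝ) (hx : A *ᵥ x = μ • x)
    (p : ℝ[X]) : (Polynomial.aeval A p) *ᵥ x = (p.eval μ) • x := by
  rw [Polynomial.aeval_eq_sum_range]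
  have hps : p.eval μ = ∑ i ∈ Finset.range (p.natDegree + 1), p.coeff i * μ ^ i := by
    rw [Polynomial.eval_eq_sum_range]
  rw [hps]
  rw [sum_mulVec']
  rw [Finset.sum_smul]
  refine Finset.sum_congr rfl fun i _ => ?_
  rw [Matrix.smul_mulVec, pow_mulVec_eig A x μ hx i, smul_smul]

lemma aeval_transpose (A : Matrix m m ℝ) (hA : Aᵀ = A) (p : ℝ[X]) :
    (Polynomial.aeval A p)ᵀ = Polynomial.aeval A p := by
  rw [Polynomial.aeval_eq_sum_range, Matrix.transpose_sum]
  refine Finset.sum_congr rfl fun i _ => ?_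
  rw [Matrix.transpose_smul, Matrix.transpose_pow, hA]

/-- Characteristic polynomial of a diagonal matrix. -/
lemma charpoly_diagonal (d : m → ℝ) :
    (Matrix.diagonal d).charpoly = ∏ i, (X - C (d i)) := by
  have h : charmatrix (Matrix.diagonal d) = Matrix.diagonal fun i => (X : ℝ[X]) - C (d i) := by
    ext i j
    by_cases h : i = j
    · subst h; simp [charmatrix_apply_eq]
    · simp [charmatrix_apply_ne _ _ _ h, Matrix.diagonal_apply_ne _ h]
  rw [Matrix.charpoly, h, Matrix.det_diagonal]

/-- Characteristic polynomial is invariant under unitary conjugation. -/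
lemma charpoly_unitary_conj (U : Matrix.unitaryGroup m ℝ) (D : Matrix m m ℝ) :
    ((U : Matrix m m ℝ) * D * star (U : Matrix m m ℝ)).charpoly = D.charpoly := by
  set f := (C : ℝ →+* ℝ[X]).mapMatrix (m := m) with hf
  have hU : f U * f (star (U : Matrix m m ℝ)) = 1 := by
    rw [← _root_.map_mul, Matrix.mem_unitaryGroup_iff.mp U.2, _root_.map_one]
  have hchar : charmatrix ((U : Matrix m m ℝ) * D * star (U : Matrix m m ℝ)) =
      f U * charmatrix D * f (star (U : Matrix m m ℝ)) := by
    unfold charmatrix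
    rw [mul_sub, sub_mul]
    congr 1
    · rw [← (Matrix.scalar_commute (X : ℝ[X]) (fun r => mul_comm _ _) (f U)).eq, mul_assoc, hU,
        mul_one]
    · simp [hf]
  rw [Matrix.charpoly, hchar, Matrix.det_mul, Matrix.det_mul, Matrix.charpoly]
  have : (f U).det * (f (star (U : Matrix m m ℝ))).det = 1 := by
    rw [← Matrix.det_mul, hU, Matrix.det_one]
  calc (f U).det * (charmatrix D).det * (f (star (U : Matrix m m ℝ))).det
      = (charmatrix D).det * ((f U).det * (f (star (U : Matrix m m ℝ))).det) := by ring
    _ = (charmatrix D).det := by rw [this, mul_one]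

/-- The multiset of roots of the characteristic polynomial of a real symmetric matrix is the
multiset of its eigenvalues. -/
lemma roots_charpoly_eq_eigenvalues {A : Matrix m m ℝ} (hA : A.IsHermitian) :
    A.charpoly.roots = Multiset.map hA.eigenvalues Finset.univ.val := by
  have hsp := hA.spectral_theorem
  have hre : (RCLike.ofReal ∘ hA.eigenvalues : m → ℝ) = hA.eigenvalues := by
    funext i; simp [RCLike.ofReal_real_eq_id]
  rw [hre] at hsp
  have h1 : A.charpoly = (Matrix.diagonal hA.eigenvalues).charpoly := by
    conv_lhs => rw [hsp]
    exact charpoly_unitary_conj _ _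
  rw [h1, _root_.charpoly_diagonal]
  have h2 : ∏ i, ((X : ℝ[X]) - C (hA.eigenvalues i)) =
      (Multiset.map (fun a => (X : ℝ[X]) - C a) (Multiset.map hA.eigenvalues
        Finset.univ.val)).prod := by
    rw [Finset.prod_eq_multiset_prod, Multiset.map_map]
    rfl
  rw [h2, Polynomial.roots_multiset_prod_X_sub_C]

/-- Key inertia-type linear algebra lemma: if the principal submatrix of a symmetric matrix `M`
on a set `s` is diagonal with diagonal entries at least `w`, then `|s|` is at most the number of
eigenvalues of `M` that are at least `w`. -/
lemma key_bound (M : Matrix m m ℝ) (hMs : Mᵀ = M) (μ : m → ℝ)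
    (b : OrthonormalBasis m ℝ (EuclideanSpace ℝ m))
    (hb : ∀ i, M *ᵥ (fun v => b i v) = μ i • (fun v => b i v))
    (w : ℝ) (s : Finset m) (hdiag : ∀ u ∈ s, w ≤ M u u)
    (hoff : ∀ u ∈ s, ∀ v ∈ s, u ≠ v → M u v = 0) [DecidablePred fun i => w ≤ μ i] :
    s.card ≤ (Finset.univ.filter fun i => w ≤ μ i).card := by
  classical
  set T := Finset.univ.filter fun i => w ≤ μ i with hT
  -- the candidate vector built from coefficients on `s`
  let xv : (↥s → ℝ) → m → ℝ := fun c v => if h : v ∈ s then c ⟨v, h⟩ else 0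
  have xv_add : ∀ c d, xv (c + d) = xv c + xv d := by
    intro c d; funext v; simp only [xv, Pi.add_apply]; split <;> simp
  have xv_smul : ∀ (a : ℝ) c, xv (a • c) = a • xv c := by
    intro a c; funext v; simp only [xv, Pi.smul_apply, smul_eq_mul]; split <;> simp
  let L : (↥s → ℝ) →ₗ[ℝ] (↥T → ℝ) :=
    { toFun := fun c j => (fun v => b (j : m) v) ⬝ᵥ xv c
      map_add' := by
        intro c d; funext j
        show (fun v => b (j : m) v) ⬝ᵥ xv (c + d) = _
        rw [xv_add, dotProduct_add]; rfl
      map_smul' := by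
        intro a c; funext j
        show (fun v => b (j : m) v) ⬝ᵥ xv (a • c) = _
        rw [xv_smul, dotProduct_smul]; rfl }
  have hker : ∀ c, L c = 0 → c = 0 := by
    intro c hc
    set x : m → ℝ := xv c with hx
    have hxs : ∀ v, v ∉ s → x v = 0 := by intro v hv; simp only [hx, xv, dif_neg hv]
    have hxc : ∀ u : ↥s, x (u : m) = c u := by
      intro u; simp only [hx, xv, dif_pos u.2]
    set t : m → ℝ := fun i => (fun v => b i v) ⬝ᵥ x with hts
    have ht0 : ∀ j ∈ T, t j = 0 := by
      intro j hj
      have := congrFun hc ⟨j, hj⟩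
      simpa [L] using this
    -- inner products as dot products
    have hinner : ∀ (f g : EuclideanSpace ℝ m), (inner ℝ f g : ℝ) = ∑ v, f v * g v := by
      intro f g
      rw [PiLp.inner_apply]
      simp [mul_comm]
    set x' : EuclideanSpace ℝ m := (WithLp.equiv 2 (m → ℝ)).symm x with hx'
    have hx'v : ∀ v, x' v = x v := fun v => rfl
    have hti : ∀ i, t i = ∑ v, b i v * x v := fun i => rfl
    -- Parseval
    have hpar : ∑ i, t i * t i = ∑ v, x v * x v := by
      have hparse := b.sum_inner_mul_inner x' x'
      have e1 : ∀ i, (inner ℝ x' (b i) : ℝ) = t i := by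
        intro i; rw [hinner, hti]
        exact Finset.sum_congr rfl fun v _ => mul_comm _ _
      have e2 : ∀ i, (inner ℝ (b i) x' : ℝ) = t i := by
        intro i; rw [hinner, hti]; rfl
      have e3 : (inner ℝ x' x' : ℝ) = ∑ v, x v * x v := by rw [hinner]; rfl
      rw [← e3, ← hparse]
      exact Finset.sum_congr rfl fun i _ => by rw [e1, e2]
    -- quadratic form via eigenvalues
    have hMb : ∀ i, (fun v => b i v) ⬝ᵥ (M *ᵥ x) = μ i * t i := by
      intro i
      rw [Matrix.dotProduct_mulVec, ← Matrix.mulVec_transpose, hMs, hb i]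
      rw [smul_dotProduct]
      rfl
    set Mx' : EuclideanSpace ℝ m := (WithLp.equiv 2 (m → ℝ)).symm (M *ᵥ x) with hMx'
    have hQ1 : x ⬝ᵥ (M *ᵥ x) = ∑ i, μ i * (t i * t i) := by
      have hparse := b.sum_inner_mul_inner x' Mx'
      have e1 : ∀ i, (inner ℝ x' (b i) : ℝ) = t i := by
        intro i; rw [hinner, hti]
        exact Finset.sum_congr rfl fun v _ => mul_comm _ _
      have e2 : ∀ i, (inner ℝ (b i) Mx' : ℝ) = μ i * t i := by
        intro i; rw [hinner]
        exact hMb i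
      have e3 : (inner ℝ x' Mx' : ℝ) = x ⬝ᵥ (M *ᵥ x) := by rw [hinner]; rfl
      rw [← e3, ← hparse]
      refine Finset.sum_congr rfl fun i _ => ?_
      rw [e1, e2]; ring
    -- quadratic form via entries
    have hxx : x ⬝ᵥ x = ∑ u ∈ s, x u * x u := by
      rw [dotProduct]
      refine (Finset.sum_subset s.subset_univ fun v _ hv => ?_).symm
      rw [hxs v hv, mul_zero]
    have hQ2 : x ⬝ᵥ (M *ᵥ x) = ∑ u ∈ s, M u u * (x u * x u) := by
      rw [dotProduct]
      have h1 : ∀ u : m, x u * (M *ᵥ x) u = x u * ∑ v ∈ s, M u v * x v := by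
        intro u
        congr 1
        refine (Finset.sum_subset s.subset_univ fun v _ hv => ?_).symm
        rw [hxs v hv, mul_zero]
      calc ∑ u, x u * (M *ᵥ x) u
          = ∑ u ∈ s, x u * (M *ᵥ x) u := by
            refine (Finset.sum_subset s.subset_univ fun v _ hv => ?_).symm
            rw [hxs v hv, zero_mul]
        _ = ∑ u ∈ s, M u u * (x u * x u) := by
            refine Finset.sum_congr rfl fun u hu => ?_
            rw [h1 u]
            have : ∑ v ∈ s, M u v * x v = M u u * x u := by
              refine Finset.sum_eq_single_of_mem u hu fun v hv hne => ?_
              rw [hoff u hu v hv (Ne.symm hne), zero_mul]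
            rw [this]; ring
    have hQlow : w * (x ⬝ᵥ x) ≤ x ⬝ᵥ (M *ᵥ x) := by
      rw [hQ2, hxx, Finset.mul_sum]
      refine Finset.sum_le_sum fun u hu => ?_
      exact mul_le_mul_of_nonneg_right (hdiag u hu) (mul_self_nonneg _)
    -- sum over complement of T
    have hsum_all : ∑ i, (w - μ i) * (t i * t i) ≤ 0 := by
      have : ∑ i, (w - μ i) * (t i * t i)
          = w * (∑ i, t i * t i) - ∑ i, μ i * (t i * t i) := by
        rw [Finset.mul_sum, ← Finset.sum_sub_distrib]
        exact Finset.sum_congr rfl fun i _ => by ring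
      rw [this, hpar, ← hQ1]
      have : (∑ v, x v * x v) = x ⬝ᵥ x := rfl
      rw [this]
      linarith [hQlow]
    have hterm : ∀ i ∈ Finset.univ, i ∉ T → (0:ℝ) ≤ (w - μ i) * (t i * t i) := by
      intro i _ hi
      have : ¬ w ≤ μ i := by simpa [hT] using hi
      have h1 : 0 ≤ w - μ i := by linarith [lt_of_not_ge this]
      exact mul_nonneg h1 (mul_self_nonneg _)
    have hT0 : ∀ i ∈ T, (w - μ i) * (t i * t i) = 0 := by
      intro i hi; rw [ht0 i hi]; ring
    have hsum_nonneg : 0 ≤ ∑ i, (w - μ i) * (t i * t i) := by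
      refine Finset.sum_nonneg fun i _ => ?_
      by_cases hi : i ∈ T
      · rw [hT0 i hi]
      · exact hterm i (Finset.mem_univ i) hi
    have hsum_eq : ∑ i, (w - μ i) * (t i * t i) = 0 := le_antisymm hsum_all hsum_nonneg
    have hall : ∀ i ∈ Finset.univ, (w - μ i) * (t i * t i) = 0 := by
      refine (Finset.sum_eq_zero_iff_of_nonneg fun i hi => ?_).mp hsum_eq
      by_cases h : i ∈ T
      · rw [hT0 i h]
      · exact hterm i hi h
    have htz : ∀ i, t i = 0 := by
      intro i
      by_cases hi : i ∈ T
      · exact ht0 i hi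
      · have h1 := hall i (Finset.mem_univ i)
        have : ¬ w ≤ μ i := by simpa [hT] using hi
        have h2 : w - μ i ≠ 0 := by linarith [lt_of_not_ge this]
        have h3 : t i * t i = 0 := by
          rcases mul_eq_zero.mp h1 with h | h
          · exact absurd h h2
          · exact h
        exact mul_self_eq_zero.mp h3
    have hxz : ∑ v, x v * x v = 0 := by
      rw [← hpar]
      exact Finset.sum_eq_zero fun i _ => by rw [htz i]; ring
    have hxv0 : ∀ v, x v = 0 := by
      intro v
      have := (Finset.sum_eq_zero_iff_of_nonneg fun i _ => mul_self_nonneg (x i)).mp hxz v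
        (Finset.mem_univ v)
      exact mul_self_eq_zero.mp this
    funext u
    have := hxv0 (u : m)
    rw [hxc u] at this
    simpa using this
  have hinj : Function.Injective L := LinearMap.ker_eq_bot.mp (LinearMap.ker_eq_bot'.mpr hker)
  have hfin := LinearMap.finrank_le_finrank_of_injective hinj
  rw [Module.finrank_pi, Module.finrank_pi, Fintype.card_coe, Fintype.card_coe] at hfin
  exact hfin

/-- Counting transfer along equal eigenvalue multisets. -/
lemma count_transfer {nn : ℕ} (ev : m → ℝ) (lam : Fin nn → ℝ)
    (h : Multiset.map ev Finset.univ.val = Multiset.map lam Finset.univ.val)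
    (P : ℝ → Prop) [DecidablePred P] :
    (Finset.univ.filter fun i => P (ev i)).card = (Finset.univ.filter fun i => P (lam i)).card := by
  have h1 := congrArg (Multiset.countP P) h
  rw [Multiset.countP_map, Multiset.countP_map] at h1
  have e1 : (Finset.univ.filter fun i => P (ev i)).card
      = Multiset.card (Multiset.filter (fun a => P (ev a)) Finset.univ.val) := rfl
  have e2 : (Finset.univ.filter fun i => P (lam i)).card
      = Multiset.card (Multiset.filter (fun a => P (lam a)) Finset.univ.val) := rfl
  rw [e1, e2]
  exact h1

end Aux

/-- The `k`-independence number of a graph: the maximum cardinality of a set of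
vertices that are pairwise at distance greater than `k`. -/
noncomputable def kIndepNum {V : Type*} [Fintype V] (G : SimpleGraph V) (k : ℕ) : ℕ :=
  sSup {r | ∃ s : Finset V, s.card = r ∧ ∀ u ∈ s, ∀ v ∈ s, u ≠ v → k < G.dist u v}

/-- **Inertia-type bound for the k-independence number** (Abiad–Coutinho–Fiol).
If `p` has degree at most `k`, `W = max_u (p(A))_{uu}` and `w = min_u (p(A))_{uu}`, then
`α_k(G) ≤ min{ #{i : p(λ_i) ≥ w}, #{i : p(λ_i) ≤ W} }`. -/
theorem stmt2 {V : Type*} [Fintype V] [DecidableEq V] (G : SimpleGraph V)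
    [DecidableRel G.Adj] (n k : ℕ) (hn : n = Fintype.card V) (hk : 1 ≤ k)
    (lam : Fin n → ℝ) (hsort : Antitone lam)
    (hroots : (G.adjMatrix ℝ).charpoly.roots = Multiset.map lam Finset.univ.val)
    (p : Polynomial ℝ) (hdeg : p.natDegree ≤ k)
    (W w : ℝ)
    (hW : IsGreatest (Set.range fun u : V => (Polynomial.aeval (G.adjMatrix ℝ) p) u u) W)
    (hw : IsLeast (Set.range fun u : V => (Polynomial.aeval (G.adjMatrix ℝ) p) u u) w) :
    kIndepNum G k ≤ min {i : Fin n | w ≤ p.eval (lam i)}.ncard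
      {i : Fin n | p.eval (lam i) ≤ W}.ncard := by
  classical
  set A := G.adjMatrix ℝ with hA
  set M := Polynomial.aeval A p with hM
  have hAt : Aᵀ = A := (G.isSymm_adjMatrix)
  have hAh : A.IsHermitian := by
    rw [Matrix.IsHermitian, Matrix.conjTranspose_eq_transpose_of_trivial, hAt]
  have hMt : Mᵀ = M := aeval_transpose A hAt p
  set ev := hAh.eigenvalues with hev
  have hmultiset : Multiset.map ev Finset.univ.val = Multiset.map lam Finset.univ.val := by
    rw [← roots_charpoly_eq_eigenvalues hAh, hroots]
  -- eigenvectors of M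
  have hbM : ∀ i, M *ᵥ (fun v => hAh.eigenvectorBasis i v)
      = (p.eval (ev i)) • (fun v => hAh.eigenvectorBasis i v) := by
    intro i
    exact aeval_mulVec_eig A _ (ev i) (hAh.mulVec_eigenvectorBasis i) p
  -- diagonal bounds
  have hdiagw : ∀ u : V, w ≤ M u u := fun u => hw.2 ⟨u, rfl⟩
  have hdiagW : ∀ u : V, M u u ≤ W := fun u => hW.2 ⟨u, rfl⟩
  -- off-diagonal vanishing on k-independent sets
  have hoffM : ∀ u v : V, u ≠ v → k < G.dist u v → M u v = 0 := by
    intro u v huv hdist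
    have hpow : ∀ j : ℕ, j ≤ k → (A ^ j) u v = 0 := by
      intro j hj
      rw [hA, SimpleGraph.adjMatrix_pow_apply_eq_card_walk]
      norm_cast
      rw [Fintype.card_eq_zero_iff]
      constructor
      rintro ⟨q, hq⟩
      have hq' : q.length = j := hq
      have := SimpleGraph.dist_le q
      omega
    rw [hM, Polynomial.aeval_eq_sum_range]
    rw [Matrix.sum_apply]
    refine Finset.sum_eq_zero fun i hi => ?_
    have hik : i ≤ k := by
      have := Finset.mem_range.mp hi
      omega
    rw [Matrix.smul_apply, hpow i hik, smul_zero]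
  -- the two bounds for any k-independent set
  have hbound : ∀ s : Finset V, (∀ u ∈ s, ∀ v ∈ s, u ≠ v → k < G.dist u v) →
      s.card ≤ (Finset.univ.filter fun i : V => w ≤ p.eval (ev i)).card ∧
      s.card ≤ (Finset.univ.filter fun i : V => p.eval (ev i) ≤ W).card := by
    intro s hs
    have hoff : ∀ u ∈ s, ∀ v ∈ s, u ≠ v → M u v = 0 :=
      fun u hu v hv huv => hoffM u v huv (hs u hu v hv huv)
    constructor
    · exact key_bound M hMt (fun i => p.eval (ev i)) hAh.eigenvectorBasis hbM w s
        (fun u _ => hdiagw u) hoff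
    · -- apply to -M
      have hMt' : (-M)ᵀ = -M := by rw [Matrix.transpose_neg, hMt]
      have hbM' : ∀ i, (-M) *ᵥ (fun v => hAh.eigenvectorBasis i v)
          = (-(p.eval (ev i))) • (fun v => hAh.eigenvectorBasis i v) := by
        intro i
        rw [Matrix.neg_mulVec, hbM i, neg_smul]
      have h := key_bound (-M) hMt' (fun i => -(p.eval (ev i))) hAh.eigenvectorBasis hbM' (-W) s
        (fun u _ => by simpa using neg_le_neg (hdiagW u))
        (fun u hu v hv huv => by rw [Matrix.neg_apply, hoff u hu v hv huv, neg_zero])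
      have hfe : (Finset.univ.filter fun i : V => -W ≤ -(p.eval (ev i)))
          = (Finset.univ.filter fun i : V => p.eval (ev i) ≤ W) := by
        refine Finset.filter_congr fun i _ => ?_
        constructor
        · intro h1; linarith
        · intro h1; linarith
      rwa [hfe] at h
  -- counting transfer to the `lam` side and `ncard`
  have hcount1 : (Finset.univ.filter fun i : V => w ≤ p.eval (ev i)).card
      = {i : Fin n | w ≤ p.eval (lam i)}.ncard := by
    rw [count_transfer ev lam hmultiset (fun x => w ≤ p.eval x)]
    rw [Set.ncard_eq_toFinset_card', Set.toFinset_setOf]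
  have hcount2 : (Finset.univ.filter fun i : V => p.eval (ev i) ≤ W).card
      = {i : Fin n | p.eval (lam i) ≤ W}.ncard := by
    rw [count_transfer ev lam hmultiset (fun x => p.eval x ≤ W)]
    rw [Set.ncard_eq_toFinset_card', Set.toFinset_setOf]
  -- conclude
  rw [kIndepNum]
  refine csSup_le ⟨0, ∅, by simp⟩ ?_
  rintro r ⟨s, rfl, hs⟩
  have hb := hbound s hs
  refine le_min ?_ ?_
  · rw [← hcount1]; exact hb.1
  · rw [← hcount2]; exact hb.2
end

section
/- Let G be a connected regular graph with n vertices, adjacency matrix A and eigenvalues λ_1 ≥ ... ≥ λ_n. Let p be a real polynomial of degree at most k with λ(p) := min_{2 ≤ i ≤ n} p(λ_i) < p(λ_1), and let W(p) = max_{u∈V} (p(A))_{uu}. Then α_k(G) ≤ n · (W(p) − λ(p)) / (p(λ_1) − λ(p)). -/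
open Matrix Polynomial

section Helpers

variable {m : Type*} [Fintype m] [DecidableEq m]

lemma ACF.charpoly_eval_eq (M : Matrix m m ℝ) (μ : ℝ) :
    M.charpoly.eval μ = (Matrix.diagonal (fun _ => μ) - M).det := by
  rw [Matrix.charpoly, _root_.eval_det, Matrix.matPolyEquiv_charmatrix]
  simp [Matrix.scalar_apply]

lemma ACF.root_iff_eigvec (M : Matrix m m ℝ) (μ : ℝ) :
    M.charpoly.IsRoot μ ↔ ∃ v ≠ 0, M *ᵥ v = μ • v := by
  rw [Polynomial.IsRoot, ACF.charpoly_eval_eq, ← Matrix.exists_mulVec_eq_zero_iff]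
  have key : ∀ v : m → ℝ, ((Matrix.diagonal (fun _ => μ) - M) *ᵥ v = 0) ↔ M *ᵥ v = μ • v := by
    intro v
    rw [Matrix.sub_mulVec, sub_eq_zero]
    constructor
    · intro h; funext i
      have := congrFun h i
      simp [Matrix.mulVec_diagonal] at this
      simpa using this.symm
    · intro h; funext i
      have := congrFun h i
      simp [Matrix.mulVec_diagonal]
      simpa using this.symm
  constructor
  · rintro ⟨v, hv, h⟩; exact ⟨v, hv, (key v).mp h⟩
  · rintro ⟨v, hv, h⟩; exact ⟨v, hv, (key v).mpr h⟩

lemma ACF.spectrum_isRoot (M : Matrix m m ℝ) {μ : ℝ} (h : μ ∈ spectrum ℝ M) :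
    M.charpoly.IsRoot μ := by
  rw [spectrum.mem_iff] at h
  rw [Matrix.isUnit_iff_isUnit_det, isUnit_iff_ne_zero, not_not] at h
  rw [Polynomial.IsRoot, ACF.charpoly_eval_eq]
  rw [← h]
  congr 1

lemma ACF.aeval_conj (U D : Matrix m m ℝ) (hU : U * star U = 1) (hU' : star U * U = 1)
    (q : ℝ[X]) : aeval (U * D * star U) q = U * aeval D q * star U := by
  induction q using Polynomial.induction_on with
  | C a =>
      simp only [aeval_C, Algebra.algebraMap_eq_smul_one]
      rw [Matrix.mul_smul, Matrix.smul_mul, mul_one, hU]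
  | add q r hq hr => simp [hq, hr, mul_add, add_mul]
  | monomial k a ih =>
      have h1 : (C a : ℝ[X]) * X ^ (k + 1) = C a * X ^ k * X := by ring
      rw [h1, _root_.map_mul (aeval (U * D * star U)) (C a * X ^ k) X,
        _root_.map_mul (aeval D) (C a * X ^ k) X, ih, aeval_X, aeval_X]
      rw [show U * aeval D (C a * X ^ k) * star U * (U * D * star U)
          = U * aeval D (C a * X ^ k) * (star U * U) * D * star U by
            simp only [mul_assoc]]
      rw [hU']
      simp only [mul_assoc, mul_one]

lemma ACF.aeval_diagonal (w : m → ℝ) (q : ℝ[X]) :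
    aeval (Matrix.diagonal w) q = Matrix.diagonal (fun i => q.eval (w i)) := by
  have h := Polynomial.aeval_algHom_apply (Matrix.diagonalAlgHom (n := m) (α := ℝ) ℝ) w q
  simp only [Matrix.diagonalAlgHom_apply] at h
  have hfun : (aeval (R := ℝ) w) q = fun i => q.eval (w i) := by
    funext i
    have h2 := Polynomial.aeval_algHom_apply (Pi.evalAlgHom ℝ (fun _ : m => ℝ) i) w q
    simp only [Pi.evalAlgHom_apply] at h2
    rw [← h2, Polynomial.aeval_def, Polynomial.eval₂_eq_eval_map, Algebra.algebraMap_self,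
      Polynomial.map_id]
  rw [h, hfun]

variable {V : Type*} [Fintype V] [DecidableEq V] (G : SimpleGraph V) [DecidableRel G.Adj]

lemma ACF.root_le_degree {d : ℕ} (hreg : G.IsRegularOfDegree d) {μ : ℝ}
    (h : (G.adjMatrix ℝ).charpoly.IsRoot μ) : μ ≤ (d : ℝ) := by
  obtain ⟨v, hv, hev⟩ := (ACF.root_iff_eigvec _ μ).mp h
  have hne : (Finset.univ : Finset V).Nonempty := by
    rcases Function.ne_iff.mp hv with ⟨w, hw⟩
    exact ⟨w, Finset.mem_univ w⟩
  obtain ⟨u, -, hu⟩ := Finset.exists_max_image Finset.univ (fun w => |v w|) hne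
  have hvu : 0 < |v u| := by
    rcases Function.ne_iff.mp hv with ⟨w, hw⟩
    have : 0 < |v w| := abs_pos.mpr (by simpa using hw)
    exact lt_of_lt_of_le this (hu w (Finset.mem_univ w))
  have heq : μ * v u = ∑ w ∈ G.neighborFinset u, v w := by
    have := congrFun hev u
    simpa [SimpleGraph.adjMatrix_mulVec_apply] using this.symm
  have hb : |μ| * |v u| ≤ (d : ℝ) * |v u| := by
    rw [← abs_mul, heq]
    calc |∑ w ∈ G.neighborFinset u, v w| ≤ ∑ w ∈ G.neighborFinset u, |v w| :=
          Finset.abs_sum_le_sum_abs _ _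
      _ ≤ ∑ _w ∈ G.neighborFinset u, |v u| :=
          Finset.sum_le_sum fun w _ => hu w (Finset.mem_univ w)
      _ = (d : ℝ) * |v u| := by
          rw [Finset.sum_const]
          have : (G.neighborFinset u).card = d := hreg u
          rw [this, nsmul_eq_mul]
  have habs : |μ| ≤ (d : ℝ) := le_of_mul_le_mul_right hb hvu
  exact le_trans (le_abs_self μ) habs

lemma ACF.degree_is_root {d : ℕ} (hreg : G.IsRegularOfDegree d) (hne : Nonempty V) :
    (G.adjMatrix ℝ).charpoly.IsRoot (d : ℝ) := by
  rw [ACF.root_iff_eigvec]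
  refine ⟨fun _ => 1, ?_, ?_⟩
  · intro h
    have := congrFun h (Classical.arbitrary V)
    simp at this
  · funext v
    simp [hreg v]

lemma ACF.aeval_mulVec_one {d : ℕ} (hreg : G.IsRegularOfDegree d) (q : ℝ[X]) :
    (aeval (G.adjMatrix ℝ) q) *ᵥ (fun _ => (1 : ℝ)) = q.eval (d : ℝ) • (fun _ => (1 : ℝ)) := by
  have hone : (G.adjMatrix ℝ) *ᵥ (fun _ => (1 : ℝ)) = (d : ℝ) • (fun _ => (1 : ℝ)) := by
    funext v
    simp [hreg v]
  induction q using Polynomial.induction_on with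
  | C a => simp [Algebra.algebraMap_eq_smul_one, Matrix.smul_mulVec]
  | add q r hq hr => simp [Matrix.add_mulVec, hq, hr, add_smul]
  | monomial k a ih =>
      have h1 : (C a : ℝ[X]) * X ^ (k + 1) = C a * X ^ k * X := by ring
      rw [h1, _root_.map_mul (aeval (G.adjMatrix ℝ)) (C a * X ^ k) X, aeval_X,
        ← Matrix.mulVec_mulVec, hone, Matrix.mulVec_smul, ih]
      funext x
      simp only [Pi.smul_apply, smul_eq_mul, mul_one, eval_mul, eval_X]
      ring

lemma ACF.aeval_apply_eq_zero_of_dist {k : ℕ} (p : ℝ[X]) (hdeg : p.natDegree ≤ k)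
    {u v : V} (hdist : k < G.dist u v) :
    (aeval (G.adjMatrix ℝ) p) u v = 0 := by
  rw [Polynomial.aeval_eq_sum_range]
  rw [Matrix.sum_apply]
  refine Finset.sum_eq_zero fun i hi => ?_
  rw [Finset.mem_range] at hi
  have hik : i ≤ k := le_trans (Nat.lt_succ_iff.mp hi) hdeg
  have hz : (G.adjMatrix ℝ ^ i) u v = 0 := by
    rw [SimpleGraph.adjMatrix_pow_apply_eq_card_walk]
    norm_cast
    rw [Fintype.card_eq_zero_iff]
    constructor
    rintro ⟨w, hw⟩
    have := SimpleGraph.dist_le w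
    simp only [Set.mem_setOf_eq] at hw
    omega
  simp [hz]

lemma ACF.final_algebra {s nr P1 lamp W : ℝ} (hnr : 0 < nr) (hs0 : 0 ≤ s)
    (hWl : lamp ≤ W) (hlt : lamp < P1)
    (hsq : 0 ≤ nr * nr * (s * W) - 2 * (nr * s * (P1 * s)) + s * s * (P1 * nr)
      - lamp * (nr * nr * s - 2 * (nr * s * s) + s * s * nr)) :
    s * (P1 - lamp) ≤ nr * (W - lamp) := by
  rcases eq_or_lt_of_le hs0 with hs | hs
  · rw [← hs]
    have : 0 ≤ nr * (W - lamp) := mul_nonneg hnr.le (by linarith)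
    linarith
  · nlinarith [mul_pos hnr hs]

end Helpers

/-- **Ratio-type bound for the k-independence number** (Abiad–Coutinho–Fiol).
For a connected regular graph, a polynomial `p` of degree at most `k` with
`λ(p) = min_{2 ≤ i ≤ n} p(λ_i) < p(λ_1)` and `W = max_u (p(A))_{uu}`, one has
`α_k(G) ≤ n (W − λ(p)) / (p(λ_1) − λ(p))`. -/
theorem stmt3 {V : Type*} [Fintype V] [DecidableEq V] (G : SimpleGraph V)
    [DecidableRel G.Adj] (n k d : ℕ) (hn : n = Fintype.card V)
    (hconn : G.Connected) (hreg : G.IsRegularOfDegree d)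
    (lam : Fin n → ℝ) (hsort : Antitone lam)
    (hroots : (G.adjMatrix ℝ).charpoly.roots = Multiset.map lam Finset.univ.val)
    (hpos : 0 < n)
    (p : Polynomial ℝ) (hdeg : p.natDegree ≤ k)
    (lamp : ℝ)
    (hlamp : IsLeast {y : ℝ | ∃ i : Fin n, i ≠ ⟨0, hpos⟩ ∧ y = p.eval (lam i)} lamp)
    (hlt : lamp < p.eval (lam ⟨0, hpos⟩))
    (W : ℝ)
    (hW : IsGreatest (Set.range fun u : V => (Polynomial.aeval (G.adjMatrix ℝ) p) u u) W) :
    (kIndepNum G k : ℝ) ≤ (n : ℝ) * (W - lamp) / (p.eval (lam ⟨0, hpos⟩) - lamp) := by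
  classical
  have hnV : Nonempty V := by
    rw [hn] at hpos
    exact Fintype.card_pos_iff.mp hpos
  set P1 : ℝ := p.eval (lam ⟨0, hpos⟩) with hP1def
  -- basic facts about roots
  have hchar_ne : (G.adjMatrix ℝ).charpoly ≠ 0 := (Matrix.charpoly_monic _).ne_zero
  have hroot_lam : ∀ μ : ℝ, (G.adjMatrix ℝ).charpoly.IsRoot μ → ∃ i : Fin n, lam i = μ := by
    intro μ hroot
    have hmem : μ ∈ (G.adjMatrix ℝ).charpoly.roots :=
      Polynomial.mem_roots'.mpr ⟨hchar_ne, hroot⟩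
    rw [hroots] at hmem
    rcases Multiset.mem_map.mp hmem with ⟨i, -, hi⟩
    exact ⟨i, hi⟩
  have hlam0_root : (G.adjMatrix ℝ).charpoly.IsRoot (lam ⟨0, hpos⟩) := by
    have hmem : lam ⟨0, hpos⟩ ∈ (G.adjMatrix ℝ).charpoly.roots := by
      rw [hroots]
      exact Multiset.mem_map_of_mem lam (Finset.mem_univ_val _)
    exact (Polynomial.mem_roots'.mp hmem).2
  have hd_root : (G.adjMatrix ℝ).charpoly.IsRoot (d : ℝ) := ACF.degree_is_root G hreg hnV
  have hlam0 : lam ⟨0, hpos⟩ = (d : ℝ) := by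
    obtain ⟨i0, hi0⟩ := hroot_lam _ hd_root
    have h1 : lam ⟨0, hpos⟩ ≤ (d : ℝ) := ACF.root_le_degree G hreg hlam0_root
    have h2 : (d : ℝ) ≤ lam ⟨0, hpos⟩ := by
      rw [← hi0]
      exact hsort (by simp [Fin.le_def])
    linarith
  -- λ(p) lower-bounds p at every root
  have hlamp_le : ∀ μ : ℝ, (G.adjMatrix ℝ).charpoly.IsRoot μ → lamp ≤ p.eval μ := by
    intro μ hroot
    obtain ⟨i, hi⟩ := hroot_lam μ hroot
    by_cases h0 : i = ⟨0, hpos⟩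
    · rw [← hi, h0]
      exact le_of_lt hlt
    · exact hlamp.2 ⟨i, h0, by rw [hi]⟩
  -- spectral decomposition
  have hA : (G.adjMatrix ℝ).IsHermitian := by
    rw [Matrix.IsHermitian]
    ext i j
    simp [Matrix.conjTranspose_apply, G.adj_comm i j]
  set U : Matrix V V ℝ := (hA.eigenvectorUnitary : Matrix V V ℝ) with hUdef
  have hU : U * star U = 1 := Matrix.mem_unitaryGroup_iff.mp hA.eigenvectorUnitary.2
  have hU' : star U * U = 1 := Matrix.mem_unitaryGroup_iff'.mp hA.eigenvectorUnitary.2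
  have hspec : G.adjMatrix ℝ = U * Matrix.diagonal hA.eigenvalues * star U := by
    have := hA.spectral_theorem
    simpa using this
  set M : Matrix V V ℝ := aeval (G.adjMatrix ℝ) p with hMdef
  have hM : M = U * Matrix.diagonal (fun i => p.eval (hA.eigenvalues i)) * star U := by
    rw [hMdef]
    conv_lhs => rw [hspec]
    rw [ACF.aeval_conj U _ hU hU', ACF.aeval_diagonal]
  -- positive semidefiniteness of M - lamp • 1
  have heig_le : ∀ i : V, lamp ≤ p.eval (hA.eigenvalues i) := fun i =>
    hlamp_le _ (ACF.spectrum_isRoot _ (hA.eigenvalues_mem_spectrum_real i))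
  have hPSD : (M - lamp • (1 : Matrix V V ℝ)).PosSemidef := by
    have h1 : M - lamp • (1 : Matrix V V ℝ)
        = U * Matrix.diagonal (fun i => p.eval (hA.eigenvalues i) - lamp) * star U := by
      have h2 : Matrix.diagonal (fun i : V => p.eval (hA.eigenvalues i) - lamp)
          = Matrix.diagonal (fun i => p.eval (hA.eigenvalues i))
            - Matrix.diagonal (fun _ => lamp) := by
        rw [Matrix.diagonal_sub]
      rw [h2, Matrix.mul_sub, Matrix.sub_mul, ← hM]
      congr 1
      rw [← Matrix.smul_one_eq_diagonal, Matrix.mul_smul, Matrix.smul_mul, mul_one, hU]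
    rw [h1, Matrix.star_eq_conjTranspose]
    exact (Matrix.PosSemidef.diagonal (fun i => sub_nonneg.mpr (heig_le i))).mul_mul_conjTranspose_same U
  -- symmetry of M
  have hMH : M.IsHermitian := by
    have := hPSD.isHermitian
    have hsm : (lamp • (1 : Matrix V V ℝ)).IsHermitian := by
      rw [Matrix.IsHermitian, Matrix.conjTranspose_smul, Matrix.conjTranspose_one]
      simp
    have h2 : M = (M - lamp • 1) + lamp • (1 : Matrix V V ℝ) := by abel
    rw [h2]
    exact this.add hsm
  have hMT : Mᵀ = M := by
    ext i j
    have h : Mᴴ j i = M j i := by rw [hMH]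
    rw [Matrix.conjTranspose_apply] at h
    simpa [Matrix.transpose_apply] using h.symm
  have hMsym : ∀ a b : V → ℝ, a ⬝ᵥ (M *ᵥ b) = b ⬝ᵥ (M *ᵥ a) := by
    intro a b
    rw [Matrix.dotProduct_mulVec, ← Matrix.mulVec_transpose, hMT, dotProduct_comm]
  -- extract a maximum k-independent set
  have hbdd : BddAbove {r | ∃ s : Finset V, s.card = r ∧
      ∀ u ∈ s, ∀ v ∈ s, u ≠ v → k < G.dist u v} := by
    refine ⟨Fintype.card V, ?_⟩
    rintro r ⟨S, hc, -⟩
    rw [← hc]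
    exact Finset.card_le_univ S
  have hmem : kIndepNum G k ∈ {r | ∃ s : Finset V, s.card = r ∧
      ∀ u ∈ s, ∀ v ∈ s, u ≠ v → k < G.dist u v} := by
    apply Nat.sSup_mem
    · exact ⟨0, ∅, by simp⟩
    · exact hbdd
  obtain ⟨S, hScard, hSdist⟩ := hmem
  -- vectors
  set one : V → ℝ := fun _ => 1 with honedef
  set x : V → ℝ := fun v => if v ∈ S then 1 else 0 with hxdef
  set s : ℝ := (S.card : ℝ) with hsdef
  set nr : ℝ := (n : ℝ) with hnrdef
  have hnr : 0 < nr := by rw [hnrdef]; exact_mod_cast hpos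
  have hs0 : 0 ≤ s := Nat.cast_nonneg _
  have hxdot : ∀ w : V → ℝ, x ⬝ᵥ w = ∑ u ∈ S, w u := by
    intro w
    rw [dotProduct]
    have h1 : ∀ u : V, x u * w u = if u ∈ S then w u else 0 := by
      intro u
      by_cases h : u ∈ S <;> simp [hxdef, h]
    simp_rw [h1]
    rw [Finset.sum_ite_mem, Finset.univ_inter]
  have hdotx : ∀ w : V → ℝ, w ⬝ᵥ x = ∑ u ∈ S, w u := by
    intro w
    rw [dotProduct_comm]
    exact hxdot w
  have e1 : one ⬝ᵥ one = nr := by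
    rw [honedef, hnrdef, dotProduct]
    simp [hn]
  have e2 : x ⬝ᵥ one = s := by
    rw [hxdot, honedef, hsdef]
    simp
  have e2' : one ⬝ᵥ x = s := by
    rw [hdotx, honedef, hsdef]
    simp
  have e3 : x ⬝ᵥ x = s := by
    rw [hxdot, hsdef, hxdef]
    simp
  have hone2 : M *ᵥ one = P1 • one := by
    rw [hMdef, honedef, hP1def, hlam0]
    exact ACF.aeval_mulVec_one G hreg p
  have e4 : x ⬝ᵥ (M *ᵥ one) = P1 * s := by
    rw [hone2, dotProduct_smul, e2, smul_eq_mul]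
  have e5 : one ⬝ᵥ (M *ᵥ x) = P1 * s := by
    rw [hMsym one x, e4]
  have e6 : one ⬝ᵥ (M *ᵥ one) = P1 * nr := by
    rw [hone2, dotProduct_smul, e1, smul_eq_mul]
  -- diagonal sum bound
  have key1 : x ⬝ᵥ (M *ᵥ x) = ∑ u ∈ S, M u u := by
    rw [hxdot]
    refine Finset.sum_congr rfl fun u hu => ?_
    have h1 : (M *ᵥ x) u = ∑ v ∈ S, M u v := hdotx (M u)
    rw [h1]
    refine Finset.sum_eq_single_of_mem u hu fun v hv hvu => ?_
    rw [hMdef]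
    exact ACF.aeval_apply_eq_zero_of_dist G p hdeg (hSdist u hu v hv (Ne.symm hvu))
  have key2 : ∑ u ∈ S, M u u ≤ s * W := by
    have h1 : ∀ u ∈ S, M u u ≤ W := fun u _ => hW.2 ⟨u, rfl⟩
    calc ∑ u ∈ S, M u u ≤ ∑ _u ∈ S, W := Finset.sum_le_sum h1
      _ = s * W := by rw [Finset.sum_const, nsmul_eq_mul, hsdef]
  have hxMx : x ⬝ᵥ (M *ᵥ x) ≤ s * W := key1 ▸ key2
  -- W ≥ lamp
  have hWlamp : lamp ≤ W := by
    obtain ⟨v0⟩ := hnV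
    have h1 := hPSD.dotProduct_mulVec_nonneg (Pi.single v0 1)
    have h2 : star (Pi.single v0 (1:ℝ)) ⬝ᵥ ((M - lamp • 1) *ᵥ Pi.single v0 1)
        = M v0 v0 - lamp := by
      simp [dotProduct, Matrix.mulVec, Pi.single_apply, Matrix.sub_apply,
        Matrix.smul_apply, Matrix.one_apply, ite_mul, mul_ite, mul_one, mul_zero,
        Finset.sum_ite_eq', Finset.sum_ite_eq]
    rw [h2] at h1
    have h3 : M v0 v0 ≤ W := hW.2 ⟨v0, rfl⟩
    linarith
  -- main quadratic inequality
  set y : V → ℝ := nr • x - s • one with hydef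
  have hq0 : 0 ≤ y ⬝ᵥ ((M - lamp • 1) *ᵥ y) := by
    have := hPSD.dotProduct_mulVec_nonneg y
    simpa using this
  have expand : y ⬝ᵥ ((M - lamp • 1) *ᵥ y)
      = nr * nr * (x ⬝ᵥ (M *ᵥ x)) - 2 * (nr * s * (P1 * s)) + s * s * (P1 * nr)
        - lamp * (nr * nr * s - 2 * (nr * s * s) + s * s * nr) := by
    rw [hydef]
    simp only [Matrix.sub_mulVec, Matrix.mulVec_sub, Matrix.mulVec_smul,
      Matrix.smul_mulVec, Matrix.one_mulVec, dotProduct_sub,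
      sub_dotProduct, dotProduct_smul, smul_dotProduct,
      smul_eq_mul, e1, e2, e2', e3, e4, e5, e6]
    ring
  rw [expand] at hq0
  -- conclude
  have hgoal : s * (P1 - lamp) ≤ nr * (W - lamp) := by
    have hmul : nr * nr * (x ⬝ᵥ (M *ᵥ x)) ≤ nr * nr * (s * W) :=
      mul_le_mul_of_nonneg_left hxMx (by positivity)
    have hsq : 0 ≤ nr * nr * (s * W) - 2 * (nr * s * (P1 * s)) + s * s * (P1 * nr)
        - lamp * (nr * nr * s - 2 * (nr * s * s) + s * s * nr) := by linarith
    exact ACF.final_algebra hnr hs0 hWlamp hlt hsq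
  have hcast : (kIndepNum G k : ℝ) = s := by rw [hsdef, hScard]
  rw [hcast, le_div_iff₀ (show (0:ℝ) < P1 - lamp by linarith)]
  exact hgoal
end

section
/- For the Kneser graph K(n,k) with n > 2k ≥ 2, the independence number equals C(n−1,k−1). -/
/-- The Kneser graph `K(n,k)`: vertices are the `k`-subsets of an `n`-set,
two vertices being adjacent iff the corresponding subsets are disjoint. -/
def kneserGraph (n k : ℕ) : SimpleGraph {s : Finset (Fin n) // s.card = k} where
  Adj a b := Disjoint (a : Finset (Fin n)) (b : Finset (Fin n)) ∧ a ≠ b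
  symm := ⟨fun a b h => ⟨h.1.symm, h.2.symm⟩⟩
  loopless := ⟨fun a h => h.2 rfl⟩

/-- **Erdős–Ko–Rado:** for `n > 2k ≥ 2`, the independence number of the Kneser graph
`K(n,k)` equals `C(n−1, k−1)`. -/
theorem stmt11 (n k : ℕ) (hk : 1 ≤ k) (hn : 2 * k < n) :
    indepNum (kneserGraph n k) = (n - 1).choose (k - 1) := by
  have hn0 : 0 < n := lt_of_le_of_lt (Nat.zero_le _) hn
  have hkn2 : k ≤ n / 2 := Nat.le_div_iff_mul_le (by norm_num) |>.2
    (by omega)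
  -- Upper bound for any independent set
  have hub : ∀ r ∈ {r | ∃ s : Finset {s : Finset (Fin n) // s.card = k},
      s.card = r ∧ ∀ u ∈ s, ∀ v ∈ s, u ≠ v → ¬ (kneserGraph n k).Adj u v},
      r ≤ (n - 1).choose (k - 1) := by
    rintro r ⟨s, rfl, hs⟩
    set 𝒜 : Finset (Finset (Fin n)) := s.image (fun a => a.1) with h𝒜
    have hcard : 𝒜.card = s.card := Finset.card_image_of_injective _ Subtype.val_injective
    rw [← hcard]
    refine Finset.erdos_ko_rado ?_ ?_ hkn2
    · rintro A hA B hB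
      simp only [h𝒜, Finset.coe_image, Set.mem_image, Finset.mem_coe] at hA hB
      obtain ⟨a, ha, rfl⟩ := hA
      obtain ⟨b, hb, rfl⟩ := hB
      intro hdis
      by_cases hab : a = b
      · subst hab
        have h1 : (a : Finset (Fin n)).card = k := a.2
        have h2 : (a : Finset (Fin n)) = ∅ := Finset.disjoint_self_iff_empty _ |>.1 hdis
        rw [h2, Finset.card_empty] at h1
        omega
      · exact hs a ha b hb hab ⟨hdis, hab⟩
    · rintro A hA
      simp only [h𝒜, Finset.coe_image, Set.mem_image, Finset.mem_coe] at hA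
      obtain ⟨a, _, rfl⟩ := hA
      exact a.2
  -- The star family achieves the bound
  have hmem : (n - 1).choose (k - 1) ∈ {r | ∃ s : Finset {s : Finset (Fin n) // s.card = k},
      s.card = r ∧ ∀ u ∈ s, ∀ v ∈ s, u ≠ v → ¬ (kneserGraph n k).Adj u v} := by
    have z : Fin n := ⟨0, hn0⟩
    set s : Finset {s : Finset (Fin n) // s.card = k} :=
      Finset.univ.filter (fun a => z ∈ (a : Finset (Fin n))) with hsdef
    refine ⟨s, ?_, ?_⟩
    · -- count: bijection with (k-1)-subsets of univ.erase z
      have : s.card = (((Finset.univ.erase z).powersetCard (k - 1)).image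
          (insert z)).card := by
        apply Finset.card_bij (fun (a : {s : Finset (Fin n) // s.card = k}) (_ : a ∈ s) => a.1)
        · rintro a ha
          simp only [hsdef, Finset.mem_filter] at ha
          simp only [Finset.mem_image, Finset.mem_powersetCard]
          refine ⟨(a : Finset (Fin n)).erase z, ⟨?_, ?_⟩, ?_⟩
          · intro x hx
            simp only [Finset.mem_erase] at hx ⊢
            exact ⟨hx.1, Finset.mem_univ _⟩
          · rw [Finset.card_erase_of_mem ha.2, a.2]
          · rw [Finset.insert_erase ha.2]
        · intro a _ b _ h
          exact Subtype.ext h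
        · rintro B hB
          simp only [Finset.mem_image, Finset.mem_powersetCard] at hB
          obtain ⟨t, ⟨ht, htc⟩, rfl⟩ := hB
          have hzt : z ∉ t := fun h => (Finset.mem_erase.1 (ht h)).1 rfl
          have hc : (insert z t).card = k := by
            rw [Finset.card_insert_of_notMem hzt, htc]; omega
          refine ⟨⟨insert z t, hc⟩, ?_, rfl⟩
          simp [hsdef]
      rw [this, Finset.card_image_of_injOn, Finset.card_powersetCard,
        Finset.card_erase_of_mem (Finset.mem_univ z), Finset.card_univ, Fintype.card_fin]
      intro A hA B hB h
      simp only [Finset.mem_coe, Finset.mem_powersetCard] at hA hB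
      have hzA : z ∉ A := fun hh => (Finset.mem_erase.1 (hA.1 hh)).1 rfl
      have hzB : z ∉ B := fun hh => (Finset.mem_erase.1 (hB.1 hh)).1 rfl
      rw [← Finset.erase_insert hzA, ← Finset.erase_insert hzB, h]
    · intro u hu v hv huv hadj
      simp only [hsdef, Finset.mem_filter] at hu hv
      exact (Finset.disjoint_left.1 hadj.1 hu.2) hv.2
  have hbdd : BddAbove {r | ∃ s : Finset {s : Finset (Fin n) // s.card = k},
      s.card = r ∧ ∀ u ∈ s, ∀ v ∈ s, u ≠ v → ¬ (kneserGraph n k).Adj u v} :=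
    ⟨(n - 1).choose (k - 1), hub⟩
  exact le_antisymm (csSup_le ⟨_, hmem⟩ hub) (le_csSup hbdd hmem)
end

section
/- Suppose r ≥ 2 and θ_0 > ... > θ_d are distinct reals with π_i = Π_{j≠i}|θ_i − θ_j|, and and define m_i = π_0/π_i for even i and m_i = (r−1)π_0/π_i for odd i. Then n := Σ_{i=0}^d m_i = (r/2)·Σ_{i=0}^d π_0/π_i, and Σ_{i=0}^d π_0²/(m_i π_i²) = n/(r−1). -/
open Finset Polynomial

lemma keysum (d : ℕ) (hd : 1 ≤ d) (θ : Fin (d + 1) → ℝ) (hinj : Function.Injective θ) :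
    ∑ i : Fin (d + 1), ∏ j ∈ Finset.univ.erase i, (θ i - θ j)⁻¹ = 0 := by
  have hs : (Finset.univ : Finset (Fin (d+1))).Nonempty := univ_nonempty
  have hsum := Lagrange.sum_basis hinj.injOn hs
  have h := congrArg (fun p => Polynomial.coeff p d) hsum
  simp only [Polynomial.finset_sum_coeff] at h
  have hone : (1 : ℝ[X]).coeff d = 0 := by
    rw [Polynomial.coeff_one, if_neg (by omega)]
  rw [hone] at h
  rw [← h]
  refine Finset.sum_congr rfl fun i _ => ?_
  have hnd : (Lagrange.basis Finset.univ θ i).natDegree = d := by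
    rw [Lagrange.natDegree_basis hinj.injOn (mem_univ i)]
    simp
  have hlc : (Lagrange.basis Finset.univ θ i).coeff d
      = (Lagrange.basis Finset.univ θ i).leadingCoeff := by
    rw [Polynomial.leadingCoeff, hnd]
  rw [hlc]
  unfold Lagrange.basis
  rw [Polynomial.leadingCoeff_prod]
  refine Finset.prod_congr rfl fun j hj => ?_
  unfold Lagrange.basisDivisor
  rw [Polynomial.leadingCoeff_mul, Polynomial.leadingCoeff_C,
    (Polynomial.monic_X_sub_C (θ j)).leadingCoeff, mul_one]

lemma signprod (d : ℕ) (θ : Fin (d + 1) → ℝ) (hθ : StrictAnti θ) (i : Fin (d + 1)) :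
    ∏ j ∈ Finset.univ.erase i, (θ i - θ j)
      = (-1 : ℝ) ^ (i : ℕ) * ∏ j ∈ Finset.univ.erase i, |θ i - θ j| := by
  have : ∀ j ∈ Finset.univ.erase i, θ i - θ j
      = (if j < i then (-1 : ℝ) else 1) * |θ i - θ j| := by
    intro j hj
    rcases lt_or_gt_of_ne (Finset.mem_erase.mp hj).1 with h | h
    · rw [if_pos h, abs_of_neg (by have := hθ h; linarith)]; ring
    · rw [if_neg (not_lt.mpr h.le), abs_of_pos (by have := hθ h; linarith)]; ring
  rw [Finset.prod_congr rfl this, Finset.prod_mul_distrib]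
  congr 1
  rw [Finset.prod_ite, Finset.prod_const, Finset.prod_const, one_pow, mul_one]
  congr 2
  have : (Finset.univ.erase i).filter (fun j => j < i) = Finset.Iio i := by
    ext j; simp [Finset.mem_erase, Finset.mem_Iio, and_comm]
    intro h; exact h.ne
  rw [this, Fin.card_Iio]

/-- **Computations in the proof of Proposition 5.** For `r ≥ 2` and distinct reals
`θ_0 > ⋯ > θ_d` with `π_i = Π_{j≠i}|θ_i − θ_j|`, setting `m_i = π_0/π_i` for even `i`
and `m_i = (r−1)π_0/π_i` for odd `i`, one has
`n := Σ m_i = (r/2)·Σ π_0/π_i` and `Σ π_0²/(m_i π_i²) = n/(r−1)`. -/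
theorem stmt15 (d : ℕ) (hd : 1 ≤ d) (θ : Fin (d + 1) → ℝ) (hθ : StrictAnti θ)
    (r : ℝ) (hr : 2 ≤ r)
    (π : Fin (d + 1) → ℝ)
    (hπ : ∀ i, π i = ∏ j ∈ Finset.univ.erase i, |θ i - θ j|)
    (m : Fin (d + 1) → ℝ)
    (hm : ∀ i, m i = if Even (i : ℕ) then π 0 / π i else (r - 1) * π 0 / π i)
    (n : ℝ) (hn : n = ∑ i : Fin (d + 1), m i) :
    n = (r / 2) * ∑ i : Fin (d + 1), π 0 / π i ∧
    ∑ i : Fin (d + 1), (π 0) ^ 2 / (m i * (π i) ^ 2) = n / (r - 1) := by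
  have hinj : Function.Injective θ := hθ.injective
  have hπpos : ∀ i, 0 < π i := by
    intro i
    rw [hπ i]
    exact Finset.prod_pos fun j hj =>
      abs_pos.mpr (sub_ne_zero.mpr fun h => (Finset.mem_erase.mp hj).1 (hinj h).symm)
  have hπne : ∀ i, π i ≠ 0 := fun i => (hπpos i).ne'
  have hr1 : r - 1 ≠ 0 := by intro h; linarith
  set a : Fin (d + 1) → ℝ := fun i => π 0 / π i with ha
  set E : ℝ := ∑ i ∈ Finset.univ.filter (fun i : Fin (d+1) => Even (i : ℕ)), a i with hE
  set O : ℝ := ∑ i ∈ Finset.univ.filter (fun i : Fin (d+1) => ¬ Even (i : ℕ)), a i with hO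
  have key : ∑ i : Fin (d + 1), (-1 : ℝ) ^ (i : ℕ) * (π i)⁻¹ = 0 := by
    rw [← keysum d hd θ hinj]
    refine Finset.sum_congr rfl fun i _ => ?_
    rw [Finset.prod_inv_distrib, signprod d θ hθ i, ← hπ i, mul_inv, ← inv_pow]
    norm_num
  have h3 : ∑ i : Fin (d + 1), (-1 : ℝ) ^ (i : ℕ) * a i = 0 := by
    have : ∀ i : Fin (d+1), (-1:ℝ)^(i:ℕ) * a i = π 0 * ((-1)^(i:ℕ) * (π i)⁻¹) := by
      intro i; simp [ha, div_eq_mul_inv]; ring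
    rw [Finset.sum_congr rfl fun i _ => this i, ← Finset.mul_sum, key, mul_zero]
  have hEO : E = O := by
    rw [← Finset.sum_filter_add_sum_filter_not Finset.univ (fun i : Fin (d+1) => Even (i : ℕ))
      (fun i => (-1:ℝ)^(i:ℕ) * a i)] at h3
    have h4 : ∑ i ∈ Finset.univ.filter (fun i : Fin (d+1) => Even (i : ℕ)),
        (-1:ℝ)^(i:ℕ) * a i = E := by
      refine Finset.sum_congr rfl fun i hi => ?_
      rw [(Finset.mem_filter.mp hi).2.neg_one_pow, one_mul]
    have h5 : ∑ i ∈ Finset.univ.filter (fun i : Fin (d+1) => ¬ Even (i : ℕ)),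
        (-1:ℝ)^(i:ℕ) * a i = -O := by
      rw [hO, ← Finset.sum_neg_distrib]
      refine Finset.sum_congr rfl fun i hi => ?_
      rw [(Nat.not_even_iff_odd.mp (Finset.mem_filter.mp hi).2).neg_one_pow]
      ring
    rw [h4, h5] at h3
    linarith
  have hS : ∑ i : Fin (d + 1), a i = E + O :=
    (Finset.sum_filter_add_sum_filter_not _ _ _).symm
  have hn' : n = E + (r - 1) * O := by
    rw [hn, ← Finset.sum_filter_add_sum_filter_not Finset.univ
      (fun i : Fin (d+1) => Even (i : ℕ)) m]
    congr 1
    · refine Finset.sum_congr rfl fun i hi => ?_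
      rw [hm i, if_pos (Finset.mem_filter.mp hi).2]
    · rw [Finset.mul_sum]
      refine Finset.sum_congr rfl fun i hi => ?_
      rw [hm i, if_neg (Finset.mem_filter.mp hi).2]
      simp [ha]; ring
  constructor
  · rw [hS, hn', ← hEO]; ring
  · have hterm : ∀ i : Fin (d+1), (π 0) ^ 2 / (m i * (π i) ^ 2)
        = if Even (i : ℕ) then a i else a i / (r - 1) := by
      intro i
      rw [hm i]
      split_ifs with h
      · simp only [ha]
        field_simp [hπne i, hπne 0]
      · simp only [ha]
        field_simp [hπne i, hπne 0, hr1]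
    rw [Finset.sum_congr rfl fun i _ => hterm i,
      ← Finset.sum_filter_add_sum_filter_not Finset.univ
        (fun i : Fin (d+1) => Even (i : ℕ))]
    have h6 : ∑ i ∈ Finset.univ.filter (fun i : Fin (d+1) => Even (i : ℕ)),
        (if Even (i:ℕ) then a i else a i / (r-1)) = E :=
      Finset.sum_congr rfl fun i hi => if_pos (Finset.mem_filter.mp hi).2
    have h7 : ∑ i ∈ Finset.univ.filter (fun i : Fin (d+1) => ¬ Even (i : ℕ)),
        (if Even (i:ℕ) then a i else a i / (r-1)) = O / (r-1) := by
      rw [hO, Finset.sum_div]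
      exact Finset.sum_congr rfl fun i hi => if_neg (Finset.mem_filter.mp hi).2
    rw [h6, h7, hn', ← hEO]
    field_simp
    ring
end

section
/- Let G be a walk-regular graph on n vertices with distinct eigenvalues θ_0 > ... > θ_d and predistance polynomials p_0, ..., p_d, with Hoffman polynomial H = p_0 + ... + p_d (so H(θ_0) = n and H(θ_i) = 0 for i ≥ 1). Let Λ = max_{0 ≤ i ≤ d} p_d(θ_i), and assume n + Λ − p_d(θ_0) > 0. Then α_{d−1}(G) ≤ n(1 + Λ)/(n + Λ − p_d(θ_0)). -/
open Matrix Polynomial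

section Aux

variable {V : Type*} [Fintype V] [DecidableEq V]

private lemma conj_mul_conj {U : Matrix V V ℝ} (hU2 : star U * U = 1)
    (D E : Matrix V V ℝ) :
    (U * D * star U) * (U * E * star U) = U * (D * E) * star U := by
  calc (U * D * star U) * (U * E * star U)
      = U * D * (star U * U) * (E * star U) := by simp only [Matrix.mul_assoc]
    _ = U * (D * E) * star U := by rw [hU2]; simp only [Matrix.mul_assoc, Matrix.mul_one,
        Matrix.one_mul]

private lemma aeval_unitary_conj {U A : Matrix V V ℝ} {lam : V → ℝ}
    (hU1 : U * star U = 1) (hU2 : star U * U = 1)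
    (hspec : A = U * Matrix.diagonal lam * star U) (f : Polynomial ℝ) :
    Polynomial.aeval A f = U * Matrix.diagonal (fun v => f.eval (lam v)) * star U := by
  have hpow : ∀ j : ℕ, A ^ j = U * Matrix.diagonal (fun v => lam v ^ j) * star U := by
    intro j
    induction j with
    | zero =>
        have h1 : (Matrix.diagonal fun v => lam v ^ 0) = (1 : Matrix V V ℝ) := by
          simp [Matrix.diagonal_one]
        simp [pow_zero, h1, hU1]
    | succ j ih =>
        rw [pow_succ, ih, hspec, conj_mul_conj hU2, Matrix.diagonal_mul_diagonal,
          show (fun v => lam v ^ j * lam v) = (fun v => lam v ^ (j + 1)) from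
            funext fun v => (pow_succ _ _).symm]
  induction f using Polynomial.induction_on' with
  | add g h hg hh =>
      have h1 : (Matrix.diagonal fun v => (g + h).eval (lam v))
          = Matrix.diagonal (fun v => g.eval (lam v))
            + Matrix.diagonal (fun v => h.eval (lam v)) := by
        rw [Matrix.diagonal_add]
        congr 1
        funext v
        simp [Polynomial.eval_add]
      rw [map_add, hg, hh, h1, Matrix.mul_add, Matrix.add_mul]
  | monomial k a =>
      have h1 : (Matrix.diagonal fun v => (Polynomial.monomial k a).eval (lam v))
          = a • Matrix.diagonal (fun v => lam v ^ k) := by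
        ext v w
        rcases eq_or_ne v w with rfl | h
        · simp [Polynomial.eval_monomial]
        · simp [Matrix.diagonal_apply_ne _ h]
      rw [Polynomial.aeval_monomial, hpow k, h1, Algebra.algebraMap_eq_smul_one,
        smul_mul_assoc, one_mul, mul_smul_comm, smul_mul_assoc]

private lemma trace_aeval_conj {U A : Matrix V V ℝ} {lam : V → ℝ}
    (hU1 : U * star U = 1) (hU2 : star U * U = 1)
    (hspec : A = U * Matrix.diagonal lam * star U) (f : Polynomial ℝ) :
    (Polynomial.aeval A f).trace = ∑ v, f.eval (lam v) := by
  rw [aeval_unitary_conj hU1 hU2 hspec f, Matrix.trace_mul_cycle, hU2,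
    Matrix.one_mul, Matrix.trace_diagonal]

private lemma roots_charpoly_conj {U A : Matrix V V ℝ} {lam : V → ℝ}
    (hU1 : U * star U = 1) (hU2 : star U * U = 1)
    (hspec : A = U * Matrix.diagonal lam * star U) :
    A.charpoly.roots = Finset.univ.val.map lam := by
  have hUC : (U.map (Polynomial.C : ℝ → ℝ[X])) * ((star U).map Polynomial.C) = 1 := by
    rw [← Matrix.map_mul, hU1, Matrix.map_one _ (map_zero Polynomial.C) (map_one Polynomial.C)]
  have hcm : Matrix.charmatrix A = (U.map Polynomial.C)
      * Matrix.charmatrix (Matrix.diagonal lam) * ((star U).map Polynomial.C) := by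
    rw [Matrix.charmatrix, Matrix.charmatrix, Matrix.mul_sub, Matrix.sub_mul]
    congr 1
    · have hc := (Matrix.scalar_commute (X : ℝ[X]) (fun r' => Commute.all _ _)
        (U.map Polynomial.C)).eq
      rw [← hc, Matrix.mul_assoc, hUC, Matrix.mul_one]
    · rw [RingHom.mapMatrix_apply, RingHom.mapMatrix_apply, hspec, Matrix.map_mul,
        Matrix.map_mul]
  have hdiag : Matrix.charmatrix (Matrix.diagonal lam)
      = Matrix.diagonal (fun v => (X : ℝ[X]) - Polynomial.C (lam v)) := by
    ext i j
    by_cases h : i = j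
    · subst h
      rw [Matrix.charmatrix_apply_eq, Matrix.diagonal_apply_eq, Matrix.diagonal_apply_eq]
    · rw [Matrix.charmatrix_apply_ne _ _ _ h, Matrix.diagonal_apply_ne _ h,
        Matrix.diagonal_apply_ne _ h, map_zero, neg_zero]
  have hchar : A.charpoly = ((Finset.univ.val.map lam).map fun a => (X : ℝ[X]) - C a).prod := by
    rw [Matrix.charpoly, hcm, Matrix.det_mul, Matrix.det_mul, mul_comm, ← mul_assoc, mul_comm
      (((star U).map Polynomial.C).det), ← Matrix.det_mul, hUC, Matrix.det_one, one_mul, hdiag,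
      Matrix.det_diagonal, Finset.prod_eq_multiset_prod, Multiset.map_map]
    rfl
  rw [hchar, Polynomial.roots_multiset_prod_X_sub_C]

end Aux

/-- **Corollary (bound on `α_{d−1}` via the predistance polynomial `p_d`).**
Let `G` be a walk-regular graph on `n` vertices with distinct eigenvalues
`θ_0 > ⋯ > θ_d`, predistance polynomials `p_0, …, p_d` and Hoffman polynomial
`H = p_0 + ⋯ + p_d` (so `H(θ_0) = n` and `H(θ_i) = 0` for `i ≥ 1`). Let
`Λ = max_{0 ≤ i ≤ d} p_d(θ_i)` and assume `n + Λ − p_d(θ_0) > 0`. Then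
`α_{d−1}(G) ≤ n(1 + Λ)/(n + Λ − p_d(θ_0))`. -/
theorem stmt18 {V : Type*} [Fintype V] [DecidableEq V] (G : SimpleGraph V)
    [DecidableRel G.Adj] (n d : ℕ) (hn : n = Fintype.card V) (hd : 1 ≤ d)
    (θ : Fin (d + 1) → ℝ) (hθ : StrictAnti θ) (m : Fin (d + 1) → ℕ)
    (hroots : (G.adjMatrix ℝ).charpoly.roots =
      Finset.univ.val.bind fun i => Multiset.replicate (m i) (θ i))
    -- `G` is walk-regular:
    (hwr : ∀ p : Polynomial ℝ, ∀ u : V,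
      (Polynomial.aeval (G.adjMatrix ℝ) p) u u =
        Matrix.trace (Polynomial.aeval (G.adjMatrix ℝ) p) / n)
    -- the predistance polynomials `p_0, …, p_d`:
    (p : ℕ → Polynomial ℝ)
    (hpdeg : ∀ i ≤ d, (p i).natDegree = i)
    (hporth : ∀ i ≤ d, ∀ j ≤ d, i ≠ j →
      Matrix.trace (Polynomial.aeval (G.adjMatrix ℝ) (p i * p j)) = 0)
    (hpnorm : ∀ i ≤ d, (p i).eval (θ 0) =
      Matrix.trace (Polynomial.aeval (G.adjMatrix ℝ) (p i * p i)) / n)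
    -- the Hoffman polynomial `H = p_0 + ⋯ + p_d`:
    (H : Polynomial ℝ) (hH : H = ∑ i ∈ Finset.range (d + 1), p i)
    (hH0 : H.eval (θ 0) = n)
    (hHi : ∀ i : Fin (d + 1), i ≠ 0 → H.eval (θ i) = 0)
    -- `Λ = max_{0 ≤ i ≤ d} p_d(θ_i)`:
    (Λ : ℝ) (hΛ : IsGreatest {y : ℝ | ∃ i : Fin (d + 1), y = (p d).eval (θ i)} Λ)
    (hden : 0 < (n : ℝ) + Λ - (p d).eval (θ 0)) :
    (kIndepNum G (d - 1) : ℝ) ≤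
      (n : ℝ) * (1 + Λ) / ((n : ℝ) + Λ - (p d).eval (θ 0)) := by
  classical
  set A : Matrix V V ℝ := G.adjMatrix ℝ with hAdef
  -- extract a witness set for the k-independence number
  have hS : kIndepNum G (d - 1) ∈ {r | ∃ s : Finset V, s.card = r ∧
      ∀ u ∈ s, ∀ v ∈ s, u ≠ v → (d - 1) < G.dist u v} := by
    apply Nat.sSup_mem
    · exact ⟨0, ∅, by simp, by simp⟩
    · exact ⟨Fintype.card V, by rintro r ⟨s, rfl, -⟩; exact s.card_le_univ⟩
  obtain ⟨S, hScard, hSdist⟩ := hS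
  set r : ℕ := kIndepNum G (d - 1) with hrdef
  have hrn : (r : ℝ) ≤ (n : ℝ) := by
    have : S.card ≤ Fintype.card V := S.card_le_univ
    rw [hScard] at this
    rw [hn]
    exact_mod_cast this
  rcases Nat.eq_zero_or_pos n with hn0 | hnpos
  · -- degenerate empty case
    have hncast : ((n : ℕ) : ℝ) = 0 := by rw [hn0]; norm_num
    rw [hncast, zero_mul, zero_div]
    linarith
  -- main case : n > 0
  have hnR : (0 : ℝ) < n := by exact_mod_cast hnpos
  have hnne : (n : ℝ) ≠ 0 := ne_of_gt hnR
  have hVne : Nonempty V := Fintype.card_pos_iff.mp (hn ▸ hnpos)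
  have hA : A.IsHermitian := by
    show Aᴴ = A
    rw [Matrix.conjTranspose_eq_transpose_of_trivial]
    exact SimpleGraph.transpose_adjMatrix G
  set lam : V → ℝ := hA.eigenvalues with hlamdef
  set U : Matrix V V ℝ := (hA.eigenvectorUnitary : Matrix V V ℝ) with hUdef
  have hU1 : U * star U = 1 := Unitary.mul_star_self_of_mem hA.eigenvectorUnitary.2
  have hU2 : star U * U = 1 := Unitary.star_mul_self_of_mem hA.eigenvectorUnitary.2
  have hspec : A = U * Matrix.diagonal lam * star U := by
    simpa [RCLike.ofReal_real_eq_id, Function.comp_def] using hA.spectral_theorem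
  -- every eigenvalue is some θ i
  have hι : ∀ v : V, ∃ i : Fin (d + 1), lam v = θ i := by
    intro v
    have hmem : lam v ∈ A.charpoly.roots := by
      rw [roots_charpoly_conj hU1 hU2 hspec]
      exact Multiset.mem_map_of_mem lam (Finset.mem_val.mpr (Finset.mem_univ v))
    rw [hAdef] at hmem
    rw [hroots] at hmem
    obtain ⟨i, _, hrep⟩ := Multiset.mem_bind.mp hmem
    exact ⟨i, Multiset.eq_of_mem_replicate hrep⟩
  -- trace of H(A)² equals n²
  have htrHH : (Polynomial.aeval A (H * H)).trace = (n : ℝ) * n := by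
    have expand : H * H = ∑ i ∈ Finset.range (d + 1), ∑ j ∈ Finset.range (d + 1), p i * p j := by
      rw [hH, Finset.sum_mul_sum]
    rw [expand]
    rw [map_sum, Matrix.trace_sum]
    have step : ∀ i ∈ Finset.range (d + 1),
        (Polynomial.aeval A (∑ j ∈ Finset.range (d + 1), p i * p j)).trace
          = (n : ℝ) * (p i).eval (θ 0) := by
      intro i hi
      have hid : i ≤ d := Nat.lt_succ_iff.mp (Finset.mem_range.mp hi)
      rw [map_sum, Matrix.trace_sum]
      rw [Finset.sum_eq_single i]
      · rw [hpnorm i hid]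
        field_simp
      · intro j hj hji
        exact hporth i hid j (Nat.lt_succ_iff.mp (Finset.mem_range.mp hj)) (Ne.symm hji)
      · intro hnot
        exact absurd hi hnot
    rw [Finset.sum_congr rfl step, ← Finset.mul_sum]
    congr 1
    rw [← hH0, hH, Polynomial.eval_finset_sum]
  -- there is a unique vertex index with eigenvalue θ 0
  have hsumH2 : ∑ v : V, (H.eval (lam v)) ^ 2 = (n : ℝ) * n := by
    rw [← htrHH, trace_aeval_conj hU1 hU2 hspec]
    apply Finset.sum_congr rfl
    intro v _
    rw [Polynomial.eval_mul, sq]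
  have hfilter : (Finset.univ.filter (fun v => lam v = θ 0)).card = 1 := by
    have h2 : ∑ v : V, (H.eval (lam v)) ^ 2
        = ((Finset.univ.filter (fun v => lam v = θ 0)).card : ℝ) * ((n : ℝ) * n) := by
      calc ∑ v : V, (H.eval (lam v)) ^ 2
          = ∑ v : V, (if lam v = θ 0 then (n : ℝ) * n else 0) := by
            apply Finset.sum_congr rfl
            intro v _
            by_cases hv : lam v = θ 0
            · rw [if_pos hv, hv, hH0]; ring
            · rw [if_neg hv]
              obtain ⟨i, hi⟩ := hι v
              have hi0 : i ≠ 0 := by rintro rfl; exact hv hi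
              rw [hi, hHi i hi0]; ring
        _ = ((Finset.univ.filter (fun v => lam v = θ 0)).card : ℝ) * ((n : ℝ) * n) := by
            rw [← Finset.sum_filter, Finset.sum_const, nsmul_eq_mul]
    have hnn : (n : ℝ) * n ≠ 0 := by positivity
    have h3 : ((Finset.univ.filter (fun v => lam v = θ 0)).card : ℝ) * ((n : ℝ) * n)
        = 1 * ((n : ℝ) * n) := by rw [← h2, hsumH2, one_mul]
    have := mul_right_cancel₀ hnn h3
    exact_mod_cast this
  obtain ⟨v0, hv0⟩ := Finset.card_eq_one.mp hfilter
  have hv0lam : lam v0 = θ 0 := by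
    have : v0 ∈ Finset.univ.filter (fun v => lam v = θ 0) := by
      rw [hv0]; exact Finset.mem_singleton_self v0
    simpa using this
  have huniq : ∀ v, lam v = θ 0 → v = v0 := by
    intro v hv
    have : v ∈ Finset.univ.filter (fun v => lam v = θ 0) :=
      Finset.mem_filter.mpr ⟨Finset.mem_univ v, hv⟩
    rw [hv0] at this
    exact Finset.mem_singleton.mp this
  -- regularity
  set kR : ℝ := (Polynomial.aeval A ((X : Polynomial ℝ) * X)).trace / n with hkRdef
  have hdeg : ∀ u : V, (G.degree u : ℝ) = kR := by
    intro u
    have h := hwr ((X : Polynomial ℝ) * X) u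
    have h2 : (Polynomial.aeval A ((X : Polynomial ℝ) * X)) u u = (G.degree u : ℝ) := by
      rw [Polynomial.aeval_mul, Polynomial.aeval_X]
      exact SimpleGraph.adjMatrix_mul_self_apply_self (α := ℝ) (G := G) u
    rw [h2] at h
    exact h
  set ones : V → ℝ := Function.const V 1 with honesdef
  have hones : A *ᵥ ones = kR • ones := by
    funext u
    have h1 : (A *ᵥ ones) u = (G.degree u : ℝ) * 1 :=
      SimpleGraph.adjMatrix_mulVec_const_apply
    rw [h1, hdeg u]
    simp [honesdef]
  -- the vector z = Uᴴ 1
  set z : V → ℝ := star U *ᵥ ones with hzdef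
  have hUz : U *ᵥ z = ones := by
    rw [hzdef, Matrix.mulVec_mulVec, hU1, Matrix.one_mulVec]
  have hDz : ∀ v, lam v * z v = kR * z v := by
    have key : star U * (U * Matrix.diagonal lam * star U) = Matrix.diagonal lam * star U := by
      rw [← Matrix.mul_assoc, ← Matrix.mul_assoc, hU2, Matrix.one_mul]
    have h1 : star U *ᵥ (A *ᵥ ones) = Matrix.diagonal lam *ᵥ z := by
      rw [hspec, Matrix.mulVec_mulVec, key, ← Matrix.mulVec_mulVec, ← hzdef]
    have h2 : star U *ᵥ (A *ᵥ ones) = kR • z := by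
      rw [hones, Matrix.mulVec_smul, ← hzdef]
    intro v
    have h3 := congrFun (h1.symm.trans h2) v
    rw [Matrix.mulVec_diagonal] at h3
    rw [h3, Pi.smul_apply, smul_eq_mul]
  have hz0ne : ∃ v, z v ≠ 0 := by
    by_contra h
    push_neg at h
    have hz0 : z = 0 := funext h
    have : ones = 0 := by rw [← hUz, hz0, Matrix.mulVec_zero]
    have := congrFun this (Classical.arbitrary V)
    simp [honesdef] at this
  -- kR = θ 0
  have hkθ : kR = θ 0 := by
    obtain ⟨v, hvne⟩ := hz0ne
    have hkeig : lam v = kR := mul_right_cancel₀ hvne (hDz v)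
    obtain ⟨j, hj⟩ := hι v
    have hkle : kR ≤ θ 0 := by
      rw [← hkeig, hj]
      exact hθ.antitone (Fin.zero_le j)
    set w : V → ℝ := ⇑(hA.eigenvectorBasis v0) with hwdef
    have hw : A *ᵥ w = θ 0 • w := by
      rw [hwdef, hA.mulVec_eigenvectorBasis, ← hlamdef, hv0lam]
    have hwne : ∃ u, w u ≠ 0 := by
      by_contra hcon
      push_neg at hcon
      apply hA.eigenvectorBasis.orthonormal.ne_zero v0
      ext u
      exact hcon u
    obtain ⟨u, -, hu⟩ := Finset.exists_max_image Finset.univ (fun u => |w u|)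
      ⟨Classical.arbitrary V, Finset.mem_univ _⟩
    obtain ⟨u', hu'⟩ := hwne
    have hwu : 0 < |w u| := lt_of_lt_of_le (abs_pos.mpr hu') (hu u' (Finset.mem_univ u'))
    have hAnn : ∀ a b : V, 0 ≤ A a b := by
      intro a b
      rw [hAdef, SimpleGraph.adjMatrix_apply]
      split <;> norm_num
    have heig : (A *ᵥ w) u = θ 0 * w u := by
      rw [hw, Pi.smul_apply, smul_eq_mul]
    have hAbound : |θ 0| * |w u| ≤ kR * |w u| := by
      rw [← abs_mul, ← heig]
      calc |(A *ᵥ w) u| ≤ ∑ v2 : V, |A u v2 * w v2| := by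
            rw [Matrix.mulVec, dotProduct]
            exact Finset.abs_sum_le_sum_abs _ _
        _ ≤ ∑ v2 : V, A u v2 * |w u| := by
            apply Finset.sum_le_sum
            intro v2 _
            rw [abs_mul, abs_of_nonneg (hAnn u v2)]
            exact mul_le_mul_of_nonneg_left (hu v2 (Finset.mem_univ v2)) (hAnn u v2)
        _ = (∑ v2 : V, A u v2) * |w u| := by rw [Finset.sum_mul]
        _ = kR * |w u| := by
            have hsum : ∑ v2 : V, A u v2 = (G.degree u : ℝ) := by
              simp [hAdef, SimpleGraph.adjMatrix_apply, Finset.sum_boole, SimpleGraph.degree,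
                SimpleGraph.neighborFinset_eq_filter]
            rw [hsum, hdeg u]
    have hθk : |θ 0| ≤ kR := le_of_mul_le_mul_right hAbound hwu
    exact le_antisymm hkle (le_trans (le_abs_self _) hθk)
  -- z is supported at v0
  have hzsupp : ∀ v, v ≠ v0 → z v = 0 := by
    intro v hv
    by_contra hvz
    have : lam v = kR := mul_right_cancel₀ hvz (hDz v)
    rw [hkθ] at this
    exact hv (huniq v this)
  have hz0 : z v0 ≠ 0 := by
    obtain ⟨v, hv⟩ := hz0ne
    by_cases h : v = v0
    · rwa [h] at hv
    · exact absurd (hzsupp v h) hv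
  have hUrow : ∀ a : V, U a v0 * z v0 = 1 := by
    intro a
    have h1 : ∑ v, U a v * z v = 1 := by
      have := congrFun hUz a
      simpa [Matrix.mulVec, dotProduct, honesdef] using this
    rw [← h1]
    rw [Finset.sum_eq_single v0]
    · intro b _ hb
      rw [hzsupp b hb, mul_zero]
    · intro hnot
      exact absurd (Finset.mem_univ v0) hnot
  have hz0sq : z v0 * z v0 = (n : ℝ) := by
    have hstar : star U = Uᵀ := by
      rw [Matrix.star_eq_conjTranspose, Matrix.conjTranspose_eq_transpose_of_trivial]
    have h1 : ones ⬝ᵥ (U *ᵥ z) = z ⬝ᵥ z := by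
      rw [dotProduct_mulVec]
      congr 1
      rw [hzdef, hstar, Matrix.mulVec_transpose]
    have h2 : ones ⬝ᵥ ones = (n : ℝ) := by
      simp [dotProduct, honesdef, hn]
    have h3 : z ⬝ᵥ z = z v0 * z v0 := by
      rw [dotProduct]
      rw [Finset.sum_eq_single v0]
      · intro b _ hb
        rw [hzsupp b hb, mul_zero]
      · intro hnot
        exact absurd (Finset.mem_univ v0) hnot
    rw [← h3, ← h1, hUz, h2]
  -- H(A) is the all-ones matrix
  have hHAJ : ∀ a b : V, (Polynomial.aeval A H) a b = 1 := by
    intro a b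
    rw [aeval_unitary_conj hU1 hU2 hspec H]
    have hstep : ∀ x y : V, (U * Matrix.diagonal (fun v => H.eval (lam v)) * star U) x y
        = ∑ w : V, U x w * H.eval (lam w) * U y w := by
      intro x y
      rw [Matrix.mul_apply]
      apply Finset.sum_congr rfl
      intro w _
      rw [Matrix.mul_diagonal]
      simp [Matrix.star_apply]
    rw [hstep]
    rw [Finset.sum_eq_single v0]
    · rw [hv0lam, hH0]
      have key : U a v0 * (n : ℝ) * U b v0 = (U a v0 * z v0) * (U b v0 * z v0) := by
        rw [← hz0sq]; ring
      rw [key, hUrow a, hUrow b, one_mul]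
    · intro w _ hw
      have hlamw : lam w ≠ θ 0 := fun hcon => hw (huniq w hcon)
      obtain ⟨i, hi⟩ := hι w
      have hi0 : i ≠ 0 := by rintro rfl; exact hlamw hi
      rw [hi, hHi i hi0, mul_zero, zero_mul]
    · intro hnot
      exact absurd (Finset.mem_univ v0) hnot
  -- low-degree polynomials vanish off the diagonal on S
  have hoff : ∀ f : Polynomial ℝ, f.natDegree ≤ d - 1 → ∀ u ∈ S, ∀ v ∈ S, u ≠ v →
      (Polynomial.aeval A f) u v = 0 := by
    intro f hf u hu v hv huv
    have hdist := hSdist u hu v hv huv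
    have hpow0 : ∀ j : ℕ, j ≤ d - 1 → (A ^ j) u v = 0 := by
      intro j hj
      rw [hAdef, SimpleGraph.adjMatrix_pow_apply_eq_card_walk]
      have : IsEmpty {q : G.Walk u v | q.length = j} := by
        constructor
        rintro ⟨q, hq⟩
        have h1 : G.dist u v ≤ q.length := SimpleGraph.dist_le q
        simp only [Set.mem_setOf_eq] at hq
        omega
      rw [Fintype.card_eq_zero]
      norm_num
    rw [Polynomial.aeval_eq_sum_range, Matrix.sum_apply]
    apply Finset.sum_eq_zero
    intro j hj
    have hjle : j ≤ d - 1 := le_trans (Nat.lt_succ_iff.mp (Finset.mem_range.mp hj)) hf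
    rw [Matrix.smul_apply, hpow0 j hjle, smul_zero]
  -- entries of M = p_d(A)
  set M : Matrix V V ℝ := Polynomial.aeval A (p d) with hMdef
  have hMoffS : ∀ u ∈ S, ∀ v ∈ S, u ≠ v → M u v = 1 := by
    intro u hu v hv huv
    have hHsplit : Polynomial.aeval A H
        = M + ∑ i ∈ Finset.range d, Polynomial.aeval A (p i) := by
      rw [hH, Finset.sum_range_succ, map_add, map_sum, add_comm, ← hMdef]
    have hJ := hHAJ u v
    rw [hHsplit, Matrix.add_apply, Matrix.sum_apply] at hJ
    have hzero : ∑ i ∈ Finset.range d, (Polynomial.aeval A (p i)) u v = 0 := by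
      apply Finset.sum_eq_zero
      intro i hi
      apply hoff _ _ u hu v hv huv
      have hi' : i < d := Finset.mem_range.mp hi
      rw [hpdeg i (le_of_lt hi')]
      omega
    rw [hzero, add_zero] at hJ
    exact hJ
  have hMsymm : ∀ a b : V, M a b = M b a := by
    have hT : Mᵀ = M := by
      rw [hMdef, Polynomial.aeval_eq_sum_range, Matrix.transpose_sum]
      apply Finset.sum_congr rfl
      intro j _
      rw [Matrix.transpose_smul, Matrix.transpose_pow, hAdef, SimpleGraph.transpose_adjMatrix]
    intro a b
    have := congrFun (congrFun hT b) a
    rw [Matrix.transpose_apply] at this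
    exact this
  -- the row-sum-of-squares identity
  have hc0row : ∀ u : V, (p d).eval (θ 0) = ∑ v : V, (M u v) ^ 2 := by
    intro u
    have h1 := hpnorm d (le_refl d)
    have h2 := hwr (p d * p d) u
    have h3 : (Polynomial.aeval A (p d * p d)) u u = ∑ v : V, (M u v) ^ 2 := by
      rw [Polynomial.aeval_mul, ← hMdef, Matrix.mul_apply]
      apply Finset.sum_congr rfl
      intro v _
      rw [hMsymm v u, sq]
    rw [h1, ← h2, h3]
  have hc0nonneg : 0 ≤ (p d).eval (θ 0) := by
    rw [hc0row (Classical.arbitrary V)]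
    exact Finset.sum_nonneg fun v _ => sq_nonneg _
  -- key inequality : r ≤ 1 + p_d(θ 0)
  have hr1 : (r : ℝ) ≤ 1 + (p d).eval (θ 0) := by
    rcases Nat.eq_zero_or_pos r with h0 | hrpos
    · rw [h0]
      push_cast
      linarith
    · obtain ⟨u, hu⟩ := Finset.card_pos.mp (hScard ▸ hrpos)
      have hsub : ∑ v ∈ S.erase u, (M u v) ^ 2 ≤ ∑ v : V, (M u v) ^ 2 :=
        Finset.sum_le_sum_of_subset_of_nonneg (Finset.subset_univ _)
          (fun _ _ _ => sq_nonneg _)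
      have hec : ∀ v ∈ S.erase u, (M u v) ^ 2 = 1 := by
        intro v hv
        obtain ⟨hvne, hvS⟩ := Finset.mem_erase.mp hv
        rw [hMoffS u hu v hvS (Ne.symm hvne)]
        norm_num
      have hsumS : ∑ v ∈ S.erase u, (M u v) ^ 2 = ((r - 1 : ℕ) : ℝ) := by
        rw [Finset.sum_congr rfl hec, Finset.sum_const, Finset.card_erase_of_mem hu, hScard]
        simp
      have hr1' : ((r : ℝ) - 1) ≤ (p d).eval (θ 0) := by
        rw [hc0row u]
        have hcast : ((r - 1 : ℕ) : ℝ) = (r : ℝ) - 1 := by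
          rw [Nat.cast_sub hrpos, Nat.cast_one]
        rw [← hcast]
        rw [← hsumS]
        exact hsub
      linarith
  -- finish with arithmetic
  have hΛc0 : (p d).eval (θ 0) ≤ Λ := hΛ.2 ⟨0, rfl⟩
  rw [le_div_iff₀ hden]
  have h1 : 0 ≤ (n : ℝ) * (1 + (p d).eval (θ 0) - r) := mul_nonneg (le_of_lt hnR) (by linarith)
  have h2 : 0 ≤ ((n : ℝ) - r) * (Λ - (p d).eval (θ 0)) :=
    mul_nonneg (by linarith) (by linarith)
  nlinarith [h1, h2]
end

section
/- Let G be a connected regular graph on n vertices whose adjacency matrix A has a principal r×r submatrix equal to the zero matrix (i.e., an independent set of size r), and let λ_1 > λ_in ≥ λ_n be as usual with λ_n < 0. Then via eigenvalue interlacing of the 2×2 quotient matrix of the partition {independent set, rest}, one obtains r ≤ n·(−λ_n)/(λ_1 − λ_n). -/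
open Matrix Polynomial

lemma rayleigh_lower_aux {m : Type*} [Fintype m] [DecidableEq m] {A : Matrix m m ℝ}
    (hA : A.IsHermitian) {c : ℝ} (hc : ∀ i, c ≤ hA.eigenvalues i) (x : m → ℝ) :
    c * (x ⬝ᵥ x) ≤ x ⬝ᵥ (A *ᵥ x) := by
  set U : Matrix m m ℝ := (hA.eigenvectorUnitary : Matrix m m ℝ) with hU
  set y : m → ℝ := star U *ᵥ x with hy
  have hUU : U * star U = 1 := (Matrix.mem_unitaryGroup_iff).mp hA.eigenvectorUnitary.2
  have hdot : ∀ z : m → ℝ, x ⬝ᵥ (U *ᵥ z) = y ⬝ᵥ z := by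
    intro z
    rw [dotProduct_mulVec, hy]
    congr 1
    rw [← mulVec_transpose, star_eq_conjTranspose, conjTranspose_eq_transpose_of_trivial]
  have hdiag : ∀ (e z : m → ℝ), z ⬝ᵥ (Matrix.diagonal e *ᵥ z) = ∑ i, e i * (z i)^2 := by
    intro e z
    simp [dotProduct, mulVec_diagonal, sq]
    exact Finset.sum_congr rfl fun i _ => by ring
  have key1 : x ⬝ᵥ (A *ᵥ x) = ∑ i, hA.eigenvalues i * (y i)^2 := by
    conv_lhs => rw [hA.spectral_theorem]
    rw [Unitary.conjStarAlgAut_apply, ← mulVec_mulVec, ← mulVec_mulVec, hdot, RCLike.ofReal_real_eq_id, Function.id_comp]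
    exact hdiag hA.eigenvalues y
  have key2 : x ⬝ᵥ x = ∑ i, (y i)^2 := by
    have h : x ⬝ᵥ x = x ⬝ᵥ ((U * star U) *ᵥ x) := by rw [hUU, one_mulVec]
    rw [h, ← mulVec_mulVec, hdot, ← hy]
    simp [dotProduct, sq]
  rw [key1, key2, Finset.mul_sum]
  exact Finset.sum_le_sum fun i _ => mul_le_mul_of_nonneg_right (hc i) (sq_nonneg _)

/-- **Ratio bound via quotient-matrix interlacing.** Let `G` be a connected `κ`-regular
graph on `n` vertices whose adjacency matrix has a principal `r × r` zero submatrix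
(an independent set of size `r`), and let `λ_n < 0` be the least adjacency eigenvalue.
Then `r ≤ n·(−λ_n)/(λ_1 − λ_n)` with `λ_1 = κ`. -/
theorem stmt19 {V : Type*} [Fintype V] [DecidableEq V] (G : SimpleGraph V)
    [DecidableRel G.Adj] (κ n r : ℕ) (hn : n = Fintype.card V)
    (hconn : G.Connected) (hreg : G.IsRegularOfDegree κ)
    (s : Finset V) (hcard : s.card = r)
    (hindep : ∀ u ∈ s, ∀ v ∈ s, u ≠ v → ¬ G.Adj u v)
    (hA : (G.adjMatrix ℝ).IsHermitian)
    (lamn : ℝ) (hlamn : IsLeast (Set.range hA.eigenvalues) lamn)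
    (hneg : lamn < 0) :
    (r : ℝ) ≤ (n : ℝ) * (-lamn) / ((κ : ℝ) - lamn) := by
  have hV : Nonempty V := hconn.nonempty
  have hN : (0 : ℝ) < (n : ℝ) := by
    rw [hn]; exact_mod_cast Fintype.card_pos
  have hK : (0 : ℝ) ≤ (κ : ℝ) := Nat.cast_nonneg κ
  have hKL : (0 : ℝ) < (κ : ℝ) - lamn := by linarith
  set t : ℝ := (r : ℝ) / (n : ℝ) with ht
  set a : V → ℝ := fun v => if v ∈ s then 1 else 0 with ha
  set x : V → ℝ := a - Function.const V t with hx
  -- basic sums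
  have hsum_a : ∑ v, a v = (r : ℝ) := by
    simp [ha, Finset.sum_ite_mem, hcard]
  have haa : a ⬝ᵥ a = (r : ℝ) := by
    have : ∀ v, a v * a v = a v := by
      intro v; simp only [ha]; split <;> simp
    simp only [dotProduct, this, hsum_a]
  have haconst : ∀ c : ℝ, a ⬝ᵥ Function.const V c = (r : ℝ) * c := by
    intro c
    simp only [dotProduct, Function.const, ← Finset.sum_mul, hsum_a]
  have hconsta : ∀ (c : ℝ) (z : V → ℝ), Function.const V c ⬝ᵥ z = c * ∑ v, z v := by
    intro c z
    simp only [dotProduct, Function.const, Finset.mul_sum]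
  have hconstconst : ∀ c d : ℝ, Function.const V c ⬝ᵥ Function.const V d = (n : ℝ) * (c * d) := by
    intro c d
    simp [dotProduct, Function.const, Finset.sum_const, hn, mul_comm]
  -- adjacency computations
  have hAa0 : ∀ v ∈ s, (G.adjMatrix ℝ *ᵥ a) v = 0 := by
    intro v hv
    rw [SimpleGraph.adjMatrix_mulVec_apply]
    apply Finset.sum_eq_zero
    intro u hu
    have hadj : G.Adj v u := (SimpleGraph.mem_neighborFinset G v u).mp hu
    have hus : u ∉ s := by
      intro hus
      exact hindep v hv u hus hadj.ne hadj
    simp [ha, hus]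
  have S1 : a ⬝ᵥ (G.adjMatrix ℝ *ᵥ a) = 0 := by
    apply Finset.sum_eq_zero
    intro v _
    by_cases hv : v ∈ s
    · rw [hAa0 v hv, mul_zero]
    · simp [ha, hv]
  have hvecmul : Function.const V t ᵥ* G.adjMatrix ℝ = Function.const V ((κ : ℝ) * t) := by
    funext v
    rw [SimpleGraph.adjMatrix_vecMul_apply]
    simp [Finset.sum_const, hreg v, mul_comm]
  have S3 : Function.const V t ⬝ᵥ (G.adjMatrix ℝ *ᵥ a) = ((κ : ℝ) * t) * (r : ℝ) := by
    rw [dotProduct_mulVec, hvecmul, hconsta, hsum_a]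
  have hmv : G.adjMatrix ℝ *ᵥ x = (G.adjMatrix ℝ *ᵥ a) - Function.const V ((κ : ℝ) * t) := by
    rw [hx, mulVec_sub]
    congr 1
    funext v
    exact SimpleGraph.adjMatrix_mulVec_const_apply_of_regular hreg
  -- the two key quantities
  have hxx : x ⬝ᵥ x = (r : ℝ) - 2 * t * (r : ℝ) + (n : ℝ) * t ^ 2 := by
    rw [hx, sub_dotProduct, dotProduct_sub, dotProduct_sub, haa, haconst,
      hconsta, hconstconst, hsum_a]
    ring
  have hsAa : ∑ v, (G.adjMatrix ℝ *ᵥ a) v = (κ : ℝ) * (r : ℝ) := by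
    have h1 : Function.const V (1 : ℝ) ⬝ᵥ (G.adjMatrix ℝ *ᵥ a) = ∑ v, (G.adjMatrix ℝ *ᵥ a) v := by
      rw [hconsta]; ring
    have h2 : Function.const V (1 : ℝ) ᵥ* G.adjMatrix ℝ = Function.const V ((κ : ℝ)) := by
      funext v
      rw [SimpleGraph.adjMatrix_vecMul_apply]
      simp [Finset.sum_const, hreg v]
    rw [← h1, dotProduct_mulVec, h2, hconsta, hsum_a]
  have hqx : x ⬝ᵥ (G.adjMatrix ℝ *ᵥ x)
      = -(2 * (κ : ℝ) * t * (r : ℝ)) + (n : ℝ) * (κ : ℝ) * t ^ 2 := by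
    rw [hmv, hx, sub_dotProduct, dotProduct_sub, dotProduct_sub, S1, haconst,
      S3, hconstconst]
    ring
  -- Rayleigh bound
  have hc : ∀ i, lamn ≤ hA.eigenvalues i := fun i => hlamn.2 ⟨i, rfl⟩
  have hray := rayleigh_lower_aux hA hc x
  rw [hxx, hqx] at hray
  -- conclude
  have htN : t * (n : ℝ) = (r : ℝ) := by
    rw [ht]; field_simp
  have hn0 : (n : ℝ) ≠ 0 := hN.ne'
  have key2 : lamn * ((r : ℝ) * (n : ℝ) - (r : ℝ) ^ 2) ≤ -((κ : ℝ) * (r : ℝ) ^ 2) := by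
    rw [ht] at hray
    have h2 := mul_le_mul_of_nonneg_right hray hN.le
    have eL : lamn * ((r : ℝ) - 2 * ((r : ℝ) / n) * r + n * ((r : ℝ) / n) ^ 2) * n
        = lamn * ((r : ℝ) * n - (r : ℝ) ^ 2) := by
      field_simp
      ring
    have eR : (-(2 * (κ : ℝ) * ((r : ℝ) / n) * r) + n * (κ : ℝ) * ((r : ℝ) / n) ^ 2) * n
        = -((κ : ℝ) * (r : ℝ) ^ 2) := by
      field_simp
      ring
    rw [eL, eR] at h2
    exact h2
  rw [le_div_iff₀ hKL]
  rcases Nat.eq_zero_or_pos r with hr | hr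
  · subst hr
    simp only [Nat.cast_zero, zero_mul]
    have : (0 : ℝ) ≤ (n : ℝ) * -lamn := mul_nonneg (le_of_lt hN) (by linarith)
    linarith
  · have hR : (0 : ℝ) < (r : ℝ) := by exact_mod_cast hr
    nlinarith [key2, hR]
end
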